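/- arXiv:1408.1296 — 6 statements merged into one kernel-verified Lean document; each statement's English description precedes it below -/
import Mathlib

section
/- Let X_1,...,X_n be n nonnegative (possibly dependent) random variables with order statistics X_{1:n} ≤ ... ≤ X_{n:n}, and suppose at least one of Assumptions A, B, C holds. Then for any 0 < a ≤ b < ∞ and 0 ≤ d < ∞, the relation P(∑_{i=0}^{n-1} c_i X_{n-i:n} > x) ~ P(c_0 X_{n:n} > x) ~ ∑_{i=1}^{n} P(c_0 X_i > x) as x → ∞ holds uniformly for (c_0, c_1, ..., c_{n-1}) ∈ [a,b] × [−d,d]^{n-1}; i.e. the weights c_1,...,c_{n-1} may be negative. -/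
open MeasureTheory Filter Topology Asymptotics

noncomputable section

/-- Tail probability `P(Y > x)` of a real random variable. -/
def tailP {Ω : Type*} [MeasurableSpace Ω] (μ : Measure Ω) (Y : Ω → ℝ) (x : ℝ) : ℝ :=
  (μ {ω | x < Y ω}).toReal

/-- The maximum `X_{n:n}` of finitely many random variables. -/
def maxRV {Ω : Type*} {n : ℕ} (X : Fin n → Ω → ℝ) (ω : Ω) : ℝ := ⨆ i, X i ω

/-- The `i`-th largest value (descending order statistic, `0`-indexed):
`ordDesc X i = X_{n-i:n}`. -/
def ordDesc {Ω : Type*} {n : ℕ} (X : Fin n → Ω → ℝ) (i : Fin n) (ω : Ω) : ℝ :=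
  (((List.ofFn fun j => X j ω).mergeSort fun a b => decide (b ≤ a)).getD i 0)

/-- A tail function `T = 1 - F` is long-tailed (`F ∈ 𝓛`). -/
def LongTailedT (T : ℝ → ℝ) : Prop :=
  (∀ x : ℝ, 0 ≤ x → 0 < T x) ∧
  ∀ y : ℝ, Tendsto (fun x => T (x + y) / T x) atTop (𝓝 1)

/-- A function is dominatedly varying. -/
def DomVarFun (h : ℝ → ℝ) : Prop :=
  ∀ y : ℝ, 0 < y →
    (0 : EReal) < atTop.liminf (fun x => ((h (x * y) / h x : ℝ) : EReal)) ∧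
    atTop.limsup (fun x => ((h (x * y) / h x : ℝ) : EReal)) < ⊤

/-- A function is weakly self-neglecting. -/
def WeaklySelfNeg (h : ℝ → ℝ) : Prop :=
  ∀ y : ℝ, atTop.limsup (fun x => ((h (x + y * h x) / h x : ℝ) : EReal)) < ⊤

/-- `h ∈ 𝓗_F` where `T = 1 - F` is the tail of `F`. -/
def MemScaleClass (T h : ℝ → ℝ) : Prop :=
  (∀ᶠ x in atTop, 0 < h x) ∧
  (h =o[atTop] fun x : ℝ => x) ∧
  (∀ y : ℝ, Tendsto (fun x => T (x + y * h x) / T x) atTop (𝓝 1)) ∧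
  WeaklySelfNeg h

/-- Upper endpoint `x_F = sup {x : F(x) < 1}` of a distribution with tail `T = 1 - F`. -/
def upEnd (T : ℝ → ℝ) : EReal := sSup ((fun x : ℝ => (x : EReal)) '' {x | 0 < T x})

open Classical in
/-- The filter of "`x → x_F`". -/
def endFilter (T : ℝ → ℝ) : Filter ℝ :=
  if upEnd T = ⊤ then atTop else 𝓝[<] (upEnd T).toReal

/-- `F ∈ GMDA(h)` for `T = 1 - F`. -/
def MemGMDA (T h : ℝ → ℝ) : Prop :=
  (∀ x, 0 < h x) ∧
  ∀ y : ℝ, Tendsto (fun x => T (x + y * h x) / T x) (endFilter T) (𝓝 (Real.exp (-y)))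

/-- Condition (DS1) (for all `t > 0`). -/
def DS1 {Ω : Type*} [MeasurableSpace Ω] (μ : Measure Ω) {n : ℕ} (X : Fin n → Ω → ℝ)
    (h : ℝ → ℝ) : Prop :=
  ∀ t : ℝ, 0 < t → ∀ i j : Fin n, i ≠ j →
    Tendsto (fun x => (μ {ω | t * h x < |X i ω| ∧ x < X j ω}).toReal / tailP μ (maxRV X) x)
      atTop (𝓝 0)

/-- Condition (DS2) for a given `L > 0`. -/
def DS2 {Ω : Type*} [MeasurableSpace Ω] (μ : Measure Ω) {n : ℕ} (X : Fin n → Ω → ℝ)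
    (h : ℝ → ℝ) (L : ℝ) : Prop :=
  ∀ i j : Fin n, i < j →
    Tendsto (fun x => (μ {ω | L * h x < X i ω ∧ L * h x < X j ω}).toReal / tailP μ (maxRV X) x)
      atTop (𝓝 0)

/-- Condition (v1). -/
def CondV1 {Ω : Type*} [MeasurableSpace Ω] (μ : Measure Ω) {n : ℕ} (X : Fin n → Ω → ℝ) : Prop :=
  ∀ i j : Fin n, i < j →
    Tendsto (fun x => (μ {ω | x < X i ω ∧ x < X j ω}).toReal / tailP μ (maxRV X) x)
      atTop (𝓝 0)

/-- Assumption A: `X_{n:n}` has an infinite upper endpoint, `X_{n:n} ∈ GMDA(h)`,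
(DS1) holds for all `t > 0` and (DS2) for some `L > 0`. -/
def AssumptionA {Ω : Type*} [MeasurableSpace Ω] (μ : Measure Ω) {n : ℕ}
    (X : Fin n → Ω → ℝ) : Prop :=
  ∃ h : ℝ → ℝ,
    (∀ x : ℝ, 0 < tailP μ (maxRV X) x) ∧
    MemGMDA (tailP μ (maxRV X)) h ∧
    DS1 μ X h ∧ ∃ L : ℝ, 0 < L ∧ DS2 μ X h L

/-- Assumption B: `X_{n:n} ∈ 𝓛` and some `h ∈ 𝓗_{X_{n:n}}` satisfies (DS1) for all `t > 0`
and (DS2) for some `L > 0`. -/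
def AssumptionB {Ω : Type*} [MeasurableSpace Ω] (μ : Measure Ω) {n : ℕ}
    (X : Fin n → Ω → ℝ) : Prop :=
  LongTailedT (tailP μ (maxRV X)) ∧
  ∃ h : ℝ → ℝ, MemScaleClass (tailP μ (maxRV X)) h ∧
    DS1 μ X h ∧ ∃ L : ℝ, 0 < L ∧ DS2 μ X h L

/-- Assumption C: `X_{n:n} ∈ 𝓛 ∩ 𝓓` and some dominatedly varying `h ∈ 𝓗_{X_{n:n}}`
satisfies (DS1) for all `t > 0`. -/
def AssumptionC {Ω : Type*} [MeasurableSpace Ω] (μ : Measure Ω) {n : ℕ}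
    (X : Fin n → Ω → ℝ) : Prop :=
  LongTailedT (tailP μ (maxRV X)) ∧ DomVarFun (tailP μ (maxRV X)) ∧
  ∃ h : ℝ → ℝ, DomVarFun h ∧ MemScaleClass (tailP μ (maxRV X)) h ∧ DS1 μ X h

/-- The uniform (in the weights `c ∈ K`) max-sum asymptotic equivalence (max-sum0):
`P(∑ c_i X_{n-i:n} > x) ~ P(c_0 X_{n:n} > x) ~ ∑ P(c_0 X_i > x)` uniformly on `K`. -/
def UnifMaxSum {Ω : Type*} [MeasurableSpace Ω] (μ : Measure Ω) {n : ℕ} [NeZero n]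
    (X : Fin n → Ω → ℝ) (K : Set (Fin n → ℝ)) : Prop :=
  TendstoUniformlyOn
    (fun x (c : Fin n → ℝ) =>
      tailP μ (fun ω => ∑ i, c i * ordDesc X i ω) x /
        tailP μ (fun ω => c 0 * maxRV X ω) x) 1 atTop K ∧
  TendstoUniformlyOn
    (fun x (c : Fin n → ℝ) =>
      tailP μ (fun ω => c 0 * maxRV X ω) x /
        ∑ i, tailP μ (fun ω => c 0 * X i ω) x) 1 atTop K

end


open MeasureTheory Filter Topology Asymptotics List

namespace WOS

section ListAux
variable {n : ℕ}

private lemma countP_ofFn_eq (y : Fin n → ℝ) (p : ℝ → Bool) :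
    (List.ofFn y).countP p = (Finset.univ.filter fun j => p (y j)).card := by
  rw [List.ofFn_eq_map, List.countP_map, Finset.card_def, Finset.filter_val, Fin.univ_def]
  rw [show ((⟨List.finRange n, List.nodup_finRange n⟩ : Finset (Fin n)).val)
      = ((List.finRange n : Multiset (Fin n))) from rfl]
  rw [← Multiset.countP_eq_card_filter, Multiset.coe_countP]
  simp [Function.comp_def]

private lemma two_le_countP (p : ℝ → Bool) :
    ∀ (l : List ℝ) (i j : ℕ) (hij : i < j) (hj : j < l.length),
      p (l[i]'(hij.trans hj)) = true → p (l[j]'hj) = true → 2 ≤ l.countP p := by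
  intro l
  induction l with
  | nil => intro i j hij hj; simp at hj
  | cons a t ih =>
    intro i j hij hj hpi hpj
    match j, hj with
    | j+1, hj =>
      have hj' : j < t.length := by simpa using hj
      have hpj' : p (t[j]'hj') = true := by simpa using hpj
      match i with
      | 0 =>
        have hpa : p a = true := by simpa using hpi
        have h1 : 0 < t.countP p := List.countP_pos_iff.mpr ⟨t[j], List.getElem_mem hj', hpj'⟩
        have h2 : (a :: t).countP p = t.countP p + 1 := by
          simp [List.countP_cons, hpa]
        omega
      | i+1 =>
        have hi' : i < t.length := by
          have := hij.trans hj
          simpa using by omega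
        have hpi' : p (t[i]'hi') = true := by simpa using hpi
        have := ih i j (by omega) hj' hpi' hpj'
        simp only [List.countP_cons]
        omega

private lemma exists_pair_indices (y : Fin n → ℝ) (p : ℝ → Bool)
    (h : 2 ≤ (List.ofFn y).countP p) :
    ∃ i j : Fin n, i ≠ j ∧ p (y i) = true ∧ p (y j) = true := by
  rw [countP_ofFn_eq] at h
  obtain ⟨i, hi, j, hj, hne⟩ :=
    (Finset.one_lt_card (s := Finset.univ.filter fun j => p (y j))).mp (by omega)
  exact ⟨i, j, hne, (Finset.mem_filter.mp hi).2, (Finset.mem_filter.mp hj).2⟩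

/-- the sorted (descending) list of values -/
private noncomputable def ordD (y : Fin n → ℝ) (i : Fin n) : ℝ :=
  (((List.ofFn y).mergeSort fun a b => decide (b ≤ a)).getD i 0)

private lemma ordD_lemmas (y : Fin n → ℝ) :
    ((List.ofFn y).mergeSort fun a b => decide (b ≤ a)).length = n ∧
    ((List.ofFn y).mergeSort fun a b => decide (b ≤ a)).Pairwise (fun a b : ℝ => b ≤ a) ∧
    ((List.ofFn y).mergeSort fun a b => decide (b ≤ a)) ~ List.ofFn y := by
  refine ⟨by rw [List.length_mergeSort, List.length_ofFn], ?_, List.mergeSort_perm _ _⟩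
  have := List.pairwise_mergeSort (le := fun a b : ℝ => decide (b ≤ a))
    (fun a b c hab hbc => by simp only [decide_eq_true_eq] at *; exact hbc.trans hab)
    (fun a b => by simpa using le_total b a) (List.ofFn y)
  exact this.imp (by simp)

variable [NeZero n]

private lemma lt_iSup_fin (y : Fin n → ℝ) (r : ℝ) : r < (⨆ i, y i) ↔ ∃ i, r < y i := by
  rw [← Finset.sup'_univ_eq_ciSup, Finset.lt_sup'_iff]; simp

private lemma ordD_zero (y : Fin n → ℝ) : ordD y 0 = ⨆ i, y i := by
  obtain ⟨hlen, hsorted, hperm⟩ := ordD_lemmas y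
  set l := (List.ofFn y).mergeSort fun a b => decide (b ≤ a) with hl
  have h0 : (0 : ℕ) < l.length := by rw [hlen]; exact n.pos_of_neZero
  have hget : ordD y 0 = l[0] := List.getD_eq_getElem l 0 (by simpa using h0)
  rw [hget]
  refine le_antisymm ?_ ?_
  · have hm : l[0] ∈ List.ofFn y := hperm.mem_iff.mp (List.getElem_mem h0)
    obtain ⟨j, hj⟩ := List.mem_ofFn.mp hm
    rw [← hj]
    exact le_ciSup (Set.finite_range y).bddAbove j
  · refine ciSup_le fun i => ?_
    have hm : y i ∈ l := hperm.mem_iff.mpr (List.mem_ofFn.mpr ⟨i, rfl⟩)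
    obtain ⟨k, hk, hkeq⟩ := List.mem_iff_getElem.mp hm
    rw [← hkeq]
    rcases Nat.eq_zero_or_pos k with hk0 | hk0
    · subst hk0; exact le_rfl
    · have := (List.pairwise_iff_get.mp hsorted) ⟨0, h0⟩ ⟨k, hk⟩ (by simpa using hk0)
      simpa using this

private lemma ordD_mem (y : Fin n → ℝ) (i : Fin n) : ∃ j, ordD y i = y j := by
  obtain ⟨hlen, _, hperm⟩ := ordD_lemmas y
  set l := (List.ofFn y).mergeSort fun a b => decide (b ≤ a) with hl
  have hi : (i : ℕ) < l.length := by rw [hlen]; exact i.isLt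
  have hget : ordD y i = l[(i : ℕ)] := List.getD_eq_getElem l 0 hi
  have hm : l[(i : ℕ)] ∈ List.ofFn y := hperm.mem_iff.mp (List.getElem_mem hi)
  obtain ⟨j, hj⟩ := List.mem_ofFn.mp hm
  exact ⟨j, by rw [hget, ← hj]⟩

private lemma ordD_le_of_not_two (y : Fin n → ℝ) (s : ℝ)
    (H : ¬ ∃ i j : Fin n, i ≠ j ∧ s < y i ∧ s < y j) {i : Fin n} (hi : i ≠ 0) :
    ordD y i ≤ s := by
  by_contra hlt
  push_neg at hlt
  obtain ⟨hlen, hsorted, hperm⟩ := ordD_lemmas y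
  set l := (List.ofFn y).mergeSort fun a b => decide (b ≤ a) with hl
  have hii : (i : ℕ) < l.length := by rw [hlen]; exact i.isLt
  have hget : ordD y i = l[(i : ℕ)] := List.getD_eq_getElem l 0 hii
  rw [hget] at hlt
  have hipos : 0 < (i : ℕ) := Nat.pos_of_ne_zero (fun h => hi (Fin.ext (by simp [h])))
  have h0 : (0 : ℕ) < l.length := lt_trans hipos hii
  have h0le : l[(i : ℕ)] ≤ l[0] := by
    have := (List.pairwise_iff_get.mp hsorted) ⟨0, h0⟩ ⟨i, hii⟩ (by simpa using hipos)
    simpa using this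
  set p : ℝ → Bool := fun r => decide (s < r) with hp
  have hcount : 2 ≤ l.countP p :=
    two_le_countP p l 0 i hipos hii (by simpa [hp] using lt_of_lt_of_le hlt h0le)
      (by simpa [hp] using hlt)
  have hcount2 : 2 ≤ (List.ofFn y).countP p := by
    rwa [hperm.countP_eq p] at hcount
  obtain ⟨i', j', hne, hpi, hpj⟩ := exists_pair_indices y p hcount2
  exact H ⟨i', j', hne, by simpa [hp] using hpi, by simpa [hp] using hpj⟩


end ListAux

section MeasAux
open MeasureTheory
variable {Ω : Type*} [MeasurableSpace Ω] (μ : Measure Ω) [IsProbabilityMeasure μ]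
variable {n : ℕ} [NeZero n] (X : Fin n → Ω → ℝ)

private lemma tailP_nonneg (Y : Ω → ℝ) (x : ℝ) : 0 ≤ tailP μ Y x := ENNReal.toReal_nonneg

private lemma tailP_antitone (Y : Ω → ℝ) : Antitone (tailP μ Y) := by
  intro x y hxy
  exact ENNReal.toReal_le_toReal (measure_ne_top μ _) (measure_ne_top μ _) |>.mpr
    (measure_mono fun ω hω => lt_of_le_of_lt hxy hω)

private lemma maxRV_eq_sup' (ω : Ω) :
    maxRV X ω = Finset.univ.sup' Finset.univ_nonempty (fun i => X i ω) :=
  (Finset.sup'_univ_eq_ciSup _).symm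

private lemma maxRV_measurable (hXm : ∀ i, Measurable (X i)) : Measurable (maxRV X) := by
  have : maxRV X = fun ω => Finset.univ.sup' Finset.univ_nonempty (fun i => X i ω) := by
    funext ω; exact maxRV_eq_sup' X ω
  rw [this]
  have : (fun ω => Finset.univ.sup' Finset.univ_nonempty (fun i => X i ω))
      = Finset.univ.sup' Finset.univ_nonempty X := by
    funext ω
    rw [Finset.sup'_apply]
  rw [this]
  exact Finset.measurable_sup' _ (fun i _ => hXm i)

private lemma tailP_const_mul (Y : Ω → ℝ) {c : ℝ} (hc : 0 < c) (x : ℝ) :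
    tailP μ (fun ω => c * Y ω) x = tailP μ Y (x / c) := by
  have hset : {ω | x < c * Y ω} = {ω | x / c < Y ω} := by
    ext ω
    simp only [Set.mem_setOf_eq]
    rw [div_lt_iff₀ hc, mul_comm]
  unfold tailP
  rw [hset]

private lemma tailP_tendsto_zero {Y : Ω → ℝ} (hm : Measurable Y) :
    Tendsto (tailP μ Y) atTop (𝓝 0) := by
  have hmeas : ∀ k : ℕ, MeasurableSet {ω | (k : ℝ) < Y ω} := fun k =>
    hm measurableSet_Ioi
  have hanti : Antitone fun k : ℕ => {ω | (k : ℝ) < Y ω} := by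
    intro k m hkm ω hω
    simp only [Set.mem_setOf_eq] at hω ⊢
    exact lt_of_le_of_lt (by exact_mod_cast hkm) hω
  have hint : (⋂ k : ℕ, {ω | (k : ℝ) < Y ω}) = ∅ := by
    ext ω
    simp only [Set.mem_iInter, Set.mem_setOf_eq, Set.mem_empty_iff_false, iff_false, not_forall,
      not_lt]
    obtain ⟨k, hk⟩ := exists_nat_gt (Y ω)
    exact ⟨k, hk.le⟩
  have h1 : Tendsto (fun k : ℕ => μ {ω | (k : ℝ) < Y ω}) atTop (𝓝 0) := by
    have := MeasureTheory.tendsto_measure_iInter_atTop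
      (μ := μ) (s := fun k : ℕ => {ω | (k : ℝ) < Y ω})
      (fun k => (hmeas k).nullMeasurableSet) hanti ⟨0, measure_ne_top μ _⟩
    rwa [hint, measure_empty] at this
  have h2 : Tendsto (fun k : ℕ => tailP μ Y k) atTop (𝓝 0) := by
    have := (ENNReal.tendsto_toReal (by simp : (0 : ENNReal) ≠ ⊤)).comp h1
    exact this
  refine squeeze_zero' (Filter.Eventually.of_forall fun x => tailP_nonneg μ Y x) ?_
    (h2.comp tendsto_nat_floor_atTop)
  filter_upwards [eventually_ge_atTop (0 : ℝ)] with x hx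
  exact tailP_antitone μ Y (Nat.floor_le hx)

private lemma maxSet_eq (u : ℝ) :
    {ω | u < maxRV X ω} = ⋃ i, {ω | u < X i ω} := by
  ext ω
  simp only [Set.mem_setOf_eq, Set.mem_iUnion, maxRV]
  exact lt_iSup_fin _ u

private lemma bonferroni (A : Fin n → Set Ω) (hA : ∀ i, MeasurableSet (A i)) :
    ∑ i, μ (A i) ≤ μ (⋃ i, A i) + ∑ p ∈ Finset.univ.offDiag, μ (A p.1 ∩ A p.2) := by
  have key : ∀ s : Finset (Fin n), ∑ i ∈ s, μ (A i) ≤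
      μ (⋃ i ∈ s, A i) + ∑ p ∈ s.offDiag, μ (A p.1 ∩ A p.2) := by
    intro s
    induction s using Finset.induction_on with
    | empty => simp
    | @insert a s ha ih =>
      rw [Finset.sum_insert ha, Finset.offDiag_insert ha, Finset.set_biUnion_insert]
      have hU : MeasurableSet (⋃ i ∈ s, A i) :=
        MeasurableSet.biUnion s.countable_toSet (fun i _ => hA i)
      have h1 : μ (A a) + μ (⋃ i ∈ s, A i) =
          μ (A a ∪ ⋃ i ∈ s, A i) + μ (A a ∩ ⋃ i ∈ s, A i) :=
        (measure_union_add_inter _ hU).symm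
      have h2 : μ (A a ∩ ⋃ i ∈ s, A i) ≤ ∑ j ∈ s, μ (A a ∩ A j) := by
        rw [Set.inter_iUnion₂]
        apply measure_biUnion_finset_le
      have h3 : ∑ p ∈ s.offDiag, μ (A p.1 ∩ A p.2) + ∑ j ∈ s, μ (A a ∩ A j) ≤
          ∑ p ∈ (s.offDiag ∪ {a} ×ˢ s ∪ s ×ˢ {a}), μ (A p.1 ∩ A p.2) := by
        have hdisj : Disjoint s.offDiag ({a} ×ˢ s) := by
          rw [Finset.disjoint_left]
          rintro ⟨p1, p2⟩ hp hq
          rw [Finset.mem_offDiag] at hp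
          rw [Finset.mem_product, Finset.mem_singleton] at hq
          exact ha (hq.1 ▸ hp.1)
        have hsub : s.offDiag ∪ {a} ×ˢ s ⊆ s.offDiag ∪ {a} ×ˢ s ∪ s ×ˢ {a} :=
          Finset.subset_union_left
        calc ∑ p ∈ s.offDiag, μ (A p.1 ∩ A p.2) + ∑ j ∈ s, μ (A a ∩ A j)
            = ∑ p ∈ (s.offDiag ∪ {a} ×ˢ s), μ (A p.1 ∩ A p.2) := by
              rw [Finset.sum_union hdisj]
              congr 1
              rw [Finset.sum_product, Finset.sum_singleton]
          _ ≤ _ := Finset.sum_le_sum_of_subset hsub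
      calc μ (A a) + ∑ i ∈ s, μ (A i)
          ≤ μ (A a) + (μ (⋃ i ∈ s, A i) + ∑ p ∈ s.offDiag, μ (A p.1 ∩ A p.2)) :=
            add_le_add_right ih _
        _ = (μ (A a) + μ (⋃ i ∈ s, A i)) + ∑ p ∈ s.offDiag, μ (A p.1 ∩ A p.2) := by ring
        _ = (μ (A a ∪ ⋃ i ∈ s, A i) + μ (A a ∩ ⋃ i ∈ s, A i)) +
              ∑ p ∈ s.offDiag, μ (A p.1 ∩ A p.2) := by rw [h1]
        _ ≤ μ (A a ∪ ⋃ i ∈ s, A i) + (∑ p ∈ s.offDiag, μ (A p.1 ∩ A p.2) +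
              ∑ j ∈ s, μ (A a ∩ A j)) := by
            rw [add_assoc]
            refine add_le_add_right ?_ _
            calc μ (A a ∩ ⋃ i ∈ s, A i) + ∑ p ∈ s.offDiag, μ (A p.1 ∩ A p.2)
                = ∑ p ∈ s.offDiag, μ (A p.1 ∩ A p.2) + μ (A a ∩ ⋃ i ∈ s, A i) := add_comm _ _
              _ ≤ _ := add_le_add_right h2 _
        _ ≤ _ := add_le_add_right h3 _
  have := key Finset.univ
  simpa using this

end MeasAux

section Core
open MeasureTheory
variable {Ω : Type*} [MeasurableSpace Ω] (μ : Measure Ω) [IsProbabilityMeasure μ]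
variable {n : ℕ} [NeZero n] (X : Fin n → Ω → ℝ)

private lemma ordDesc_eq_ordD (i : Fin n) (ω : Ω) :
    ordDesc X i ω = ordD (fun j => X j ω) i := rfl

private lemma ordDesc_nonneg (hXpos : ∀ i ω, 0 ≤ X i ω) (i : Fin n) (ω : Ω) :
    0 ≤ ordDesc X i ω := by
  rw [ordDesc_eq_ordD]
  obtain ⟨j, hj⟩ := ordD_mem (fun j => X j ω) i
  rw [hj]; exact hXpos j ω

private lemma sum_decomp (c : Fin n → ℝ) (ω : Ω) :
    ∑ i, c i * ordDesc X i ω =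
      c 0 * maxRV X ω + ∑ i ∈ Finset.univ.erase 0, c i * ordDesc X i ω := by
  have h0 : ordDesc X 0 ω = maxRV X ω := ordD_zero (fun j => X j ω)
  conv_lhs => rw [← Finset.sum_erase_add Finset.univ (fun i => c i * ordDesc X i ω)
    (Finset.mem_univ (0 : Fin n))]
  rw [h0]; ring

private lemma rest_abs_le {d : ℝ} (hd : 0 ≤ d) (hXpos : ∀ i ω, 0 ≤ X i ω)
    {c : Fin n → ℝ} (hci : ∀ i : Fin n, i ≠ 0 → |c i| ≤ d) (ω : Ω) {s : ℝ} (hsge : 0 ≤ s)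
    (hbound : ∀ i : Fin n, i ≠ 0 → ordDesc X i ω ≤ s) :
    |∑ i ∈ Finset.univ.erase 0, c i * ordDesc X i ω| ≤ n * d * s := by
  calc |∑ i ∈ Finset.univ.erase 0, c i * ordDesc X i ω|
      ≤ ∑ i ∈ Finset.univ.erase 0, |c i * ordDesc X i ω| := Finset.abs_sum_le_sum_abs _ _
    _ ≤ ∑ _i ∈ Finset.univ.erase (0:Fin n), d * s := by
        refine Finset.sum_le_sum fun i hi => ?_
        have hi0 := (Finset.mem_erase.mp hi).1
        rw [abs_mul, abs_of_nonneg (ordDesc_nonneg X hXpos i ω)]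
        exact mul_le_mul (hci i hi0) (hbound i hi0) (ordDesc_nonneg X hXpos i ω) hd
    _ = (Finset.univ.erase (0:Fin n)).card * (d * s) := by rw [Finset.sum_const, nsmul_eq_mul]
    _ ≤ n * (d * s) := by
        refine mul_le_mul_of_nonneg_right ?_ (by positivity)

        have := Finset.card_erase_le (a := (0:Fin n)) (s := Finset.univ)
        have hcard : (Finset.univ : Finset (Fin n)).card = n := Finset.card_univ.trans (Fintype.card_fin n)
        exact_mod_cast le_trans this (le_of_eq hcard)
    _ = n * d * s := by ring

private lemma combine_pair {s vv : ℝ} {ω : Ω}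
    (hTwo : ∃ i j : Fin n, i ≠ j ∧ s < X i ω ∧ s < X j ω)
    (hmax : vv < maxRV X ω) : ∃ i j : Fin n, i ≠ j ∧ s < X i ω ∧ vv < X j ω := by
  obtain ⟨i, j, hij, hXi, hXj⟩ := hTwo
  obtain ⟨k, hk⟩ := (lt_iSup_fin (fun i => X i ω) vv).mp hmax
  by_cases hki : k = i
  · exact ⟨j, k, fun h => hij ((h.trans hki).symm ▸ rfl), hXj, hk⟩
  · exact ⟨i, k, fun h => hki (h.symm), hXi, hk⟩

private lemma max_gt_of_not_two {a d : ℝ} (ha : 0 < a) (hd : 0 ≤ d)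
    (hXpos : ∀ i ω, 0 ≤ X i ω)
    {c : Fin n → ℝ} (hc0a : a ≤ c 0) (hci : ∀ i : Fin n, i ≠ 0 → |c i| ≤ d)
    {u s : ℝ} (hs : 0 ≤ s) {ω : Ω}
    (hev : c 0 * u < ∑ i, c i * ordDesc X i ω)
    (hno : ¬ ∃ i j : Fin n, i ≠ j ∧ s < X i ω ∧ s < X j ω) :
    u - ((n : ℝ) * d / a) * s < maxRV X ω := by
  set C := (n : ℝ) * d / a with hC
  have hc0 : 0 < c 0 := lt_of_lt_of_le ha hc0a
  have hbound : ∀ i : Fin n, i ≠ 0 → ordDesc X i ω ≤ s := by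
    intro i hi
    rw [ordDesc_eq_ordD]
    exact ordD_le_of_not_two (fun j => X j ω) s hno hi
  have habs := rest_abs_le X hd hXpos hci ω hs hbound
  have hsum := sum_decomp X c ω
  have hrest : ∑ i ∈ Finset.univ.erase 0, c i * ordDesc X i ω ≤ n * d * s :=
    le_trans (le_abs_self _) habs
  have hf1 : c 0 * u - (n : ℝ) * d * s < c 0 * maxRV X ω := by
    rw [hsum] at hev; linarith
  have hCs : 0 ≤ C * s := by positivity
  have hf2 : C * s * a ≤ C * s * c 0 := mul_le_mul_of_nonneg_left hc0a hCs
  have hf3 : C * s * a = (n : ℝ) * d * s := by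
    rw [hC]; field_simp
  have hmul : (u - C * s) * c 0 < maxRV X ω * c 0 := by nlinarith
  exact lt_of_mul_lt_mul_right hmul hc0.le

private lemma incl_upper {a d : ℝ} (ha : 0 < a) (hd : 0 ≤ d)
    (hXpos : ∀ i ω, 0 ≤ X i ω)
    {c : Fin n → ℝ} (hc0a : a ≤ c 0) (hci : ∀ i : Fin n, i ≠ 0 → |c i| ≤ d)
    {u s₁ s₂ vv : ℝ} (hs₁ : 0 ≤ s₁) (hs₂ : 0 ≤ s₂)
    (hvv : vv ≤ u - ((n : ℝ) * d / a) * s₂)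
    {ω : Ω} (hev : c 0 * u < ∑ i, c i * ordDesc X i ω) :
    (u - ((n : ℝ) * d / a) * s₁ < maxRV X ω) ∨
    (∃ i j : Fin n, i ≠ j ∧ s₁ < X i ω ∧ vv < X j ω) ∨
    (∃ i j : Fin n, i ≠ j ∧ s₂ < X i ω ∧ s₂ < X j ω) := by
  by_cases h2 : ∃ i j : Fin n, i ≠ j ∧ s₂ < X i ω ∧ s₂ < X j ω
  · exact Or.inr (Or.inr h2)
  by_cases h1 : ∃ i j : Fin n, i ≠ j ∧ s₁ < X i ω ∧ s₁ < X j ω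
  · have hmax := max_gt_of_not_two X ha hd hXpos hc0a hci hs₂ hev h2
    exact Or.inr (Or.inl (combine_pair X h1 (lt_of_le_of_lt hvv hmax)))
  · exact Or.inl (max_gt_of_not_two X ha hd hXpos hc0a hci hs₁ hev h1)

private lemma incl_lower {a d : ℝ} (ha : 0 < a) (hd : 0 ≤ d)
    (hXpos : ∀ i ω, 0 ≤ X i ω)
    {c : Fin n → ℝ} (hc0a : a ≤ c 0) (hci : ∀ i : Fin n, i ≠ 0 → |c i| ≤ d)
    {u s₁ vv : ℝ} (hs₁ : 0 ≤ s₁) (hvu : vv ≤ u)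
    {ω : Ω} (hmax : u + ((n : ℝ) * d / a) * s₁ < maxRV X ω)
    (hnopair : ¬ ∃ i j : Fin n, i ≠ j ∧ s₁ < X i ω ∧ vv < X j ω) :
    c 0 * u < ∑ i, c i * ordDesc X i ω := by
  set C := (n : ℝ) * d / a with hC
  have hc0 : 0 < c 0 := lt_of_lt_of_le ha hc0a
  have hCs : 0 ≤ C * s₁ := by positivity
  have hno : ¬ ∃ i j : Fin n, i ≠ j ∧ s₁ < X i ω ∧ s₁ < X j ω := by
    intro hTwo
    exact hnopair (combine_pair X hTwo (lt_of_le_of_lt (by linarith) hmax))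
  have hbound : ∀ i : Fin n, i ≠ 0 → ordDesc X i ω ≤ s₁ := by
    intro i hi
    rw [ordDesc_eq_ordD]
    exact ordD_le_of_not_two (fun j => X j ω) s₁ hno hi
  have habs := rest_abs_le X hd hXpos hci ω hs₁ hbound
  have hrest : -((n:ℝ) * d * s₁) ≤ ∑ i ∈ Finset.univ.erase 0, c i * ordDesc X i ω :=
    neg_le_of_abs_le habs
  have hsum := sum_decomp X c ω
  have hf2 : C * s₁ * a ≤ C * s₁ * c 0 := mul_le_mul_of_nonneg_left hc0a hCs
  have hf3 : C * s₁ * a = (n : ℝ) * d * s₁ := by rw [hC]; field_simp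
  have hf1 : c 0 * (u + C * s₁) < c 0 * maxRV X ω := by
    exact mul_lt_mul_of_pos_left hmax hc0
  rw [hsum]; nlinarith

private noncomputable def pairSum (s v : ℝ) : ℝ :=
  ∑ p ∈ Finset.univ.offDiag, (μ {ω | s < X p.1 ω ∧ v < X p.2 ω}).toReal

private lemma pairSum_nonneg (s v : ℝ) : 0 ≤ pairSum μ X s v :=
  Finset.sum_nonneg fun _ _ => ENNReal.toReal_nonneg

private lemma measure_two_le (s v : ℝ) :
    (μ {ω | ∃ i j : Fin n, i ≠ j ∧ s < X i ω ∧ v < X j ω}).toReal ≤ pairSum μ X s v := by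
  have hsub : {ω | ∃ i j : Fin n, i ≠ j ∧ s < X i ω ∧ v < X j ω} ⊆
      ⋃ p ∈ Finset.univ.offDiag, {ω | s < X p.1 ω ∧ v < X p.2 ω} := by
    rintro ω ⟨i, j, hij, hw1, hw2⟩
    exact Set.mem_iUnion₂.mpr ⟨(i, j),
      Finset.mem_offDiag.mpr ⟨Finset.mem_univ _, Finset.mem_univ _, hij⟩, ⟨hw1, hw2⟩⟩
  have h1 : μ {ω | ∃ i j : Fin n, i ≠ j ∧ s < X i ω ∧ v < X j ω} ≤
      ∑ p ∈ Finset.univ.offDiag, μ {ω | s < X p.1 ω ∧ v < X p.2 ω} :=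
    le_trans (measure_mono hsub) (measure_biUnion_finset_le _ _)
  calc (μ {ω | ∃ i j : Fin n, i ≠ j ∧ s < X i ω ∧ v < X j ω}).toReal
      ≤ (∑ p ∈ Finset.univ.offDiag, μ {ω | s < X p.1 ω ∧ v < X p.2 ω}).toReal := by
        refine ENNReal.toReal_le_toReal (measure_ne_top μ _) ?_ |>.mpr h1
        exact (ENNReal.sum_lt_top.mpr fun p _ => measure_lt_top μ _).ne
    _ = pairSum μ X s v := ENNReal.toReal_sum fun p _ => measure_ne_top μ _

private lemma master (hXpos : ∀ i ω, 0 ≤ X i ω)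
    {a d : ℝ} (ha : 0 < a) (hd : 0 ≤ d)
    (s₁ s₂ vv : ℝ → ℝ) {ε : ℝ} (hε : 0 < ε)
    (hs₁ : ∀ᶠ u in atTop, 0 ≤ s₁ u) (hs₂ : ∀ᶠ u in atTop, 0 ≤ s₂ u)
    (hv : ∀ᶠ u in atTop, vv u ≤ u - ((n : ℝ) * d / a) * s₂ u)
    (hBad : Tendsto (fun u => (pairSum μ X (s₂ u) (s₂ u) + pairSum μ X (s₁ u) (vv u)) /
        tailP μ (maxRV X) u) atTop (𝓝 0))
    (hShiftU : ∀ᶠ u in atTop,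
      tailP μ (maxRV X) (u - ((n : ℝ) * d / a) * s₁ u) ≤ (1 + ε/2) * tailP μ (maxRV X) u)
    (hShiftL : ∀ᶠ u in atTop,
      (1 - ε/2) * tailP μ (maxRV X) u ≤ tailP μ (maxRV X) (u + ((n : ℝ) * d / a) * s₁ u))
    (hTpos : ∀ᶠ u in atTop, 0 < tailP μ (maxRV X) u) :
    ∀ᶠ u in atTop, ∀ c : Fin n → ℝ, a ≤ c 0 → (∀ i : Fin n, i ≠ 0 → |c i| ≤ d) →
      (1 - ε) * tailP μ (maxRV X) u ≤
        tailP μ (fun ω => ∑ i, c i * ordDesc X i ω) (c 0 * u) ∧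
      tailP μ (fun ω => ∑ i, c i * ordDesc X i ω) (c 0 * u) ≤
        (1 + ε) * tailP μ (maxRV X) u := by
  have hBad' : ∀ᶠ u in atTop, pairSum μ X (s₂ u) (s₂ u) + pairSum μ X (s₁ u) (vv u) ≤
      (ε/2) * tailP μ (maxRV X) u := by
    filter_upwards [hBad.eventually_lt_const (by linarith : (0:ℝ) < ε/2), hTpos] with u hu hT
    rw [div_lt_iff₀ hT] at hu
    exact hu.le
  filter_upwards [hs₁, hs₂, hv, hBad', hShiftU, hShiftL, hTpos] with u h1 h2 h3 h4 h5 h6 h7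
  intro c hc0 hci
  set C := (n : ℝ) * d / a with hC
  have hCs2 : 0 ≤ C * s₂ u := by positivity
  have hvu : vv u ≤ u := le_trans h3 (by linarith)
  constructor
  · -- lower bound
    have hsubL : {ω | u + C * s₁ u < maxRV X ω} ⊆
        {ω | c 0 * u < ∑ i, c i * ordDesc X i ω} ∪
        {ω | ∃ i j : Fin n, i ≠ j ∧ s₁ u < X i ω ∧ vv u < X j ω} := by
      intro ω hω
      by_cases hp : ∃ i j : Fin n, i ≠ j ∧ s₁ u < X i ω ∧ vv u < X j ω
      · exact Or.inr hp
      · exact Or.inl (incl_lower X ha hd hXpos hc0 hci h1 hvu hω hp)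
    have hm : μ {ω | u + C * s₁ u < maxRV X ω} ≤
        μ {ω | c 0 * u < ∑ i, c i * ordDesc X i ω} +
        μ {ω | ∃ i j : Fin n, i ≠ j ∧ s₁ u < X i ω ∧ vv u < X j ω} :=
      le_trans (measure_mono hsubL) (measure_union_le _ _)
    have hmr : tailP μ (maxRV X) (u + C * s₁ u) ≤
        tailP μ (fun ω => ∑ i, c i * ordDesc X i ω) (c 0 * u) +
        (μ {ω | ∃ i j : Fin n, i ≠ j ∧ s₁ u < X i ω ∧ vv u < X j ω}).toReal := by
      have := ENNReal.toReal_le_toReal (measure_ne_top μ _)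
        (ENNReal.add_ne_top.mpr ⟨measure_ne_top μ _, measure_ne_top μ _⟩) |>.mpr hm
      rwa [ENNReal.toReal_add (measure_ne_top μ _) (measure_ne_top μ _)] at this
    have hps := measure_two_le μ X (s₁ u) (vv u)
    have hps2 := pairSum_nonneg μ X (s₂ u) (s₂ u)
    nlinarith [h6, h4, hmr, hps]
  · -- upper bound
    have hsubU : {ω | c 0 * u < ∑ i, c i * ordDesc X i ω} ⊆
        {ω | u - C * s₁ u < maxRV X ω} ∪
        ({ω | ∃ i j : Fin n, i ≠ j ∧ s₁ u < X i ω ∧ vv u < X j ω} ∪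
         {ω | ∃ i j : Fin n, i ≠ j ∧ s₂ u < X i ω ∧ s₂ u < X j ω}) := by
      intro ω hω
      rcases incl_upper X ha hd hXpos hc0 hci h1 h2 h3 hω with h | h | h
      · exact Or.inl h
      · exact Or.inr (Or.inl h)
      · exact Or.inr (Or.inr h)
    have hm : μ {ω | c 0 * u < ∑ i, c i * ordDesc X i ω} ≤
        μ {ω | u - C * s₁ u < maxRV X ω} +
        (μ {ω | ∃ i j : Fin n, i ≠ j ∧ s₁ u < X i ω ∧ vv u < X j ω} +
         μ {ω | ∃ i j : Fin n, i ≠ j ∧ s₂ u < X i ω ∧ s₂ u < X j ω}) :=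
      le_trans (measure_mono hsubU) (le_trans (measure_union_le _ _)
        (add_le_add le_rfl (measure_union_le _ _)))
    have hmr : tailP μ (fun ω => ∑ i, c i * ordDesc X i ω) (c 0 * u) ≤
        tailP μ (maxRV X) (u - C * s₁ u) +
        ((μ {ω | ∃ i j : Fin n, i ≠ j ∧ s₁ u < X i ω ∧ vv u < X j ω}).toReal +
         (μ {ω | ∃ i j : Fin n, i ≠ j ∧ s₂ u < X i ω ∧ s₂ u < X j ω}).toReal) := by
      have := ENNReal.toReal_le_toReal (measure_ne_top μ _)
        (ENNReal.add_ne_top.mpr ⟨measure_ne_top μ _,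
          ENNReal.add_ne_top.mpr ⟨measure_ne_top μ _, measure_ne_top μ _⟩⟩) |>.mpr hm
      rwa [ENNReal.toReal_add (measure_ne_top μ _)
        (ENNReal.add_ne_top.mpr ⟨measure_ne_top μ _, measure_ne_top μ _⟩),
        ENNReal.toReal_add (measure_ne_top μ _) (measure_ne_top μ _)] at this
    have hps1 := measure_two_le μ X (s₁ u) (vv u)
    have hps2 := measure_two_le μ X (s₂ u) (s₂ u)
    nlinarith [h5, h4, hmr, hps1, hps2]

end Core

section Wrappers
open MeasureTheory
variable {Ω : Type*} [MeasurableSpace Ω] (μ : Measure Ω) [IsProbabilityMeasure μ]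
variable {n : ℕ} [NeZero n] (X : Fin n → Ω → ℝ)

private lemma comp1 {a b d : ℝ} (ha : 0 < a) (hab : a ≤ b)
    (hSand : ∀ ε : ℝ, 0 < ε → ∀ᶠ u in atTop, ∀ c : Fin n → ℝ, a ≤ c 0 →
      (∀ i : Fin n, i ≠ 0 → |c i| ≤ d) →
      (1 - ε) * tailP μ (maxRV X) u ≤
        tailP μ (fun ω => ∑ i, c i * ordDesc X i ω) (c 0 * u) ∧
      tailP μ (fun ω => ∑ i, c i * ordDesc X i ω) (c 0 * u) ≤
        (1 + ε) * tailP μ (maxRV X) u)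
    (hTpos : ∀ᶠ u in atTop, 0 < tailP μ (maxRV X) u) :
    TendstoUniformlyOn
      (fun x (c : Fin n → ℝ) =>
        tailP μ (fun ω => ∑ i, c i * ordDesc X i ω) x /
          tailP μ (fun ω => c 0 * maxRV X ω) x) 1 atTop
      {c : Fin n → ℝ | c 0 ∈ Set.Icc a b ∧ ∀ i : Fin n, i ≠ 0 → c i ∈ Set.Icc (-d) d} := by
  rw [Metric.tendstoUniformlyOn_iff]
  intro ε hε
  have hb : 0 < b := lt_of_lt_of_le ha hab
  obtain ⟨M, hM⟩ := eventually_atTop.mp ((hSand (ε/2) (by linarith)).and hTpos)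
  filter_upwards [eventually_ge_atTop (b * max M 1)] with x hx
  intro c hc
  obtain ⟨⟨hca, hcb⟩, hcic⟩ := hc
  have hc0 : 0 < c 0 := lt_of_lt_of_le ha hca
  have hci : ∀ i : Fin n, i ≠ 0 → |c i| ≤ d := fun i hi =>
    abs_le.mpr ⟨(hcic i hi).1, (hcic i hi).2⟩
  set u := x / c 0 with hu
  have hxpos : 0 < x := lt_of_lt_of_le (by positivity) hx
  have huM : M ≤ u := by
    have h2 : x / b ≤ x / c 0 := div_le_div_of_nonneg_left hxpos.le hc0 hcb
    have h3 : max M 1 ≤ x / b := by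
      rw [le_div_iff₀ hb]; nlinarith [le_max_left M 1, le_max_right M 1]
    exact le_trans (le_max_left M 1) (le_trans h3 h2)
  obtain ⟨hSu, hTu⟩ := hM u huM
  obtain ⟨hlow, hup⟩ := hSu c hca hci
  have hcu : c 0 * u = x := by rw [hu]; field_simp [hc0.ne']
  rw [hcu] at hlow hup
  have hden : tailP μ (fun ω => c 0 * maxRV X ω) x = tailP μ (maxRV X) u :=
    tailP_const_mul μ (maxRV X) hc0 x
  simp only [Pi.one_apply]
  rw [hden, Real.dist_eq]
  have hr1 : tailP μ (fun ω => ∑ i, c i * ordDesc X i ω) x / tailP μ (maxRV X) u ≤ 1 + ε/2 :=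
    (div_le_iff₀ hTu).mpr (by linarith)
  have hr2 : 1 - ε/2 ≤ tailP μ (fun ω => ∑ i, c i * ordDesc X i ω) x / tailP μ (maxRV X) u :=
    (le_div_iff₀ hTu).mpr (by linarith)
  have : |1 - tailP μ (fun ω => ∑ i, c i * ordDesc X i ω) x / tailP μ (maxRV X) u| ≤ ε/2 :=
    abs_le.mpr ⟨by linarith, by linarith⟩
  linarith [this]

private lemma comp2 {a b d : ℝ} (ha : 0 < a) (hab : a ≤ b)
    (hXm : ∀ i, Measurable (X i))
    (hPair : ∀ i j : Fin n, i ≠ j → Tendsto (fun u =>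
        (μ ({ω | u < X i ω} ∩ {ω | u < X j ω})).toReal / tailP μ (maxRV X) u) atTop (𝓝 0))
    (hTpos : ∀ᶠ u in atTop, 0 < tailP μ (maxRV X) u) :
    TendstoUniformlyOn
      (fun x (c : Fin n → ℝ) =>
        tailP μ (fun ω => c 0 * maxRV X ω) x /
          ∑ i, tailP μ (fun ω => c 0 * X i ω) x) 1 atTop
      {c : Fin n → ℝ | c 0 ∈ Set.Icc a b ∧ ∀ i : Fin n, i ≠ 0 → c i ∈ Set.Icc (-d) d} := by
  set T : ℝ → ℝ := tailP μ (maxRV X) with hT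
  set S : ℝ → ℝ := fun u => ∑ i, tailP μ (X i) u with hS
  set Pr : ℝ → ℝ := fun u => ∑ p ∈ Finset.univ.offDiag,
    (μ ({ω | u < X p.1 ω} ∩ {ω | u < X p.2 ω})).toReal with hPr
  have hTS : ∀ u, T u ≤ S u := by
    intro u
    have h1 : μ {ω | u < maxRV X ω} ≤ ∑ i, μ {ω | u < X i ω} := by
      rw [maxSet_eq]
      exact measure_iUnion_fintype_le μ _
    calc T u ≤ (∑ i, μ {ω | u < X i ω}).toReal := by
          refine ENNReal.toReal_le_toReal (measure_ne_top μ _) ?_ |>.mpr h1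
          exact (ENNReal.sum_lt_top.mpr fun i _ => measure_lt_top μ _).ne
      _ = S u := ENNReal.toReal_sum fun i _ => measure_ne_top μ _
  have hST : ∀ u, S u ≤ T u + Pr u := by
    intro u
    have h1 := bonferroni μ (fun i => {ω | u < X i ω}) (fun i => hXm i measurableSet_Ioi)
    have h2 : (∑ i, μ {ω | u < X i ω}).toReal ≤
        (μ (⋃ i, {ω | u < X i ω}) + ∑ p ∈ Finset.univ.offDiag,
          μ ({ω | u < X p.1 ω} ∩ {ω | u < X p.2 ω})).toReal := by
      refine ENNReal.toReal_le_toReal ?_ ?_ |>.mpr h1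
      · exact (ENNReal.sum_lt_top.mpr fun i _ => measure_lt_top μ _).ne
      · exact (ENNReal.add_ne_top.mpr ⟨measure_ne_top μ _,
          (ENNReal.sum_lt_top.mpr fun p _ => measure_lt_top μ _).ne⟩)
    rw [ENNReal.toReal_add (measure_ne_top μ _)
        (ENNReal.sum_lt_top.mpr fun p _ => measure_lt_top μ _).ne,
      ENNReal.toReal_sum (fun i _ => measure_ne_top μ _),
      ENNReal.toReal_sum (fun p _ => measure_ne_top μ _)] at h2
    have h3 : (μ (⋃ i, {ω | u < X i ω})).toReal = T u := by
      rw [hT]; unfold tailP; rw [maxSet_eq]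
    rw [h3] at h2
    exact h2
  have hPairT : Tendsto (fun u => Pr u / T u) atTop (𝓝 0) := by
    have heq : (fun u => Pr u / T u) = fun u => ∑ p ∈ Finset.univ.offDiag,
        (μ ({ω | u < X p.1 ω} ∩ {ω | u < X p.2 ω})).toReal / T u := by
      funext u; rw [hPr]; exact Finset.sum_div _ _ _
    rw [heq]
    have h0 : (0 : ℝ) = ∑ _p ∈ (Finset.univ : Finset (Fin n)).offDiag, (0:ℝ) := by simp
    rw [h0]
    exact tendsto_finset_sum _ fun p hp => hPair p.1 p.2 (Finset.mem_offDiag.mp hp).2.2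
  have hg : Tendsto (fun u => T u / S u) atTop (𝓝 1) := by
    have hlim : Tendsto (fun u => 1 - Pr u / T u) atTop (𝓝 1) := by
      have := tendsto_const_nhds (x := (1:ℝ)) (f := atTop) |>.sub hPairT
      simpa using this
    refine tendsto_of_tendsto_of_tendsto_of_le_of_le' hlim tendsto_const_nhds ?_ ?_
    · filter_upwards [hTpos] with u hTu
      have hS0 : 0 < S u := lt_of_lt_of_le hTu (hTS u)
      have hPr0 : 0 ≤ Pr u := Finset.sum_nonneg fun p _ => ENNReal.toReal_nonneg
      have heq1 : 1 - Pr u / T u = (T u - Pr u) / T u := by field_simp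
      rw [heq1, div_le_div_iff₀ hTu hS0]
      nlinarith [hST u, hTS u]
    · filter_upwards [hTpos] with u hTu
      exact div_le_one_of_le₀ (hTS u) (le_trans hTu.le (hTS u))
  rw [Metric.tendstoUniformlyOn_iff]
  intro ε hε
  have hb : 0 < b := lt_of_lt_of_le ha hab
  have hev : ∀ᶠ u in atTop, |T u / S u - 1| < ε := by
    filter_upwards [Metric.tendsto_nhds.mp hg ε hε] with u hu
    rwa [Real.dist_eq] at hu
  obtain ⟨M, hM⟩ := eventually_atTop.mp hev
  filter_upwards [eventually_ge_atTop (b * max M 1)] with x hx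
  intro c hc
  obtain ⟨⟨hca, hcb⟩, _⟩ := hc
  have hc0 : 0 < c 0 := lt_of_lt_of_le ha hca
  set u := x / c 0 with hu
  have hxpos : 0 < x := lt_of_lt_of_le (by positivity) hx
  have huM : M ≤ u := by
    have h2 : x / b ≤ x / c 0 := div_le_div_of_nonneg_left hxpos.le hc0 hcb
    have h3 : max M 1 ≤ x / b := by
      rw [le_div_iff₀ hb]; nlinarith [le_max_left M 1, le_max_right M 1]
    exact le_trans (le_max_left M 1) (le_trans h3 h2)
  have hnum : tailP μ (fun ω => c 0 * maxRV X ω) x = T u := tailP_const_mul μ (maxRV X) hc0 x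
  have hden : ∑ i, tailP μ (fun ω => c 0 * X i ω) x = S u :=
    Finset.sum_congr rfl fun i _ => tailP_const_mul μ (X i) hc0 x
  simp only [Pi.one_apply]
  rw [hnum, hden, Real.dist_eq, abs_sub_comm]
  exact hM u huM

end Wrappers

section Cases
open MeasureTheory
variable {Ω : Type*} [MeasurableSpace Ω] (μ : Measure Ω) [IsProbabilityMeasure μ]
variable {n : ℕ} [NeZero n] (X : Fin n → Ω → ℝ)

private lemma o_small {h : ℝ → ℝ} (ho : h =o[atTop] fun x : ℝ => x) {c : ℝ} (hc : 0 < c) :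
    ∀ᶠ u in atTop, h u ≤ c * u := by
  filter_upwards [ho.def hc, eventually_ge_atTop (0:ℝ)] with u h1 h2
  have : |h u| ≤ c * |u| := by simpa [Real.norm_eq_abs] using h1
  calc h u ≤ |h u| := le_abs_self _
    _ ≤ c * |u| := this
    _ = c * u := by rw [abs_of_nonneg h2]

private lemma ratio_tendsto_of_subset {A B : ℝ → Set Ω}
    (hsub : ∀ᶠ u in atTop, A u ⊆ B u)
    (hB : Tendsto (fun u => (μ (B u)).toReal / tailP μ (maxRV X) u) atTop (𝓝 0)) :
    Tendsto (fun u => (μ (A u)).toReal / tailP μ (maxRV X) u) atTop (𝓝 0) := by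
  refine squeeze_zero' ?_ ?_ hB
  · exact Filter.Eventually.of_forall fun u =>
      div_nonneg ENNReal.toReal_nonneg (tailP_nonneg μ _ _)
  · filter_upwards [hsub] with u hu
    have hnum : (μ (A u)).toReal ≤ (μ (B u)).toReal :=
      ENNReal.toReal_le_toReal (measure_ne_top μ _) (measure_ne_top μ _) |>.mpr
        (measure_mono hu)
    rcases (tailP_nonneg μ (maxRV X) u).eq_or_lt with h0 | h0
    · rw [← h0]; simp
    · exact (div_le_div_iff_of_pos_right h0).mpr hnum

private lemma DS2_symm {h : ℝ → ℝ} {L : ℝ} (hDS2 : DS2 μ X h L) :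
    ∀ i j : Fin n, i ≠ j → Tendsto (fun u =>
      (μ {ω | L * h u < X i ω ∧ L * h u < X j ω}).toReal / tailP μ (maxRV X) u)
      atTop (𝓝 0) := by
  intro i j hij
  rcases lt_or_gt_of_ne hij with hlt | hgt
  · exact hDS2 i j hlt
  · have heq : (fun u => (μ {ω | L * h u < X i ω ∧ L * h u < X j ω}).toReal /
        tailP μ (maxRV X) u) = fun u =>
        (μ {ω | L * h u < X j ω ∧ L * h u < X i ω}).toReal / tailP μ (maxRV X) u := by
      have hset : ∀ u : ℝ, {ω | L * h u < X i ω ∧ L * h u < X j ω} =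
          {ω | L * h u < X j ω ∧ L * h u < X i ω} := fun u => by
        ext ω; exact and_comm
      funext u
      rw [hset u]
    rw [heq]
    exact hDS2 j i hgt

private lemma pairSum_div_tendsto {s v : ℝ → ℝ}
    (hterm : ∀ p : Fin n × Fin n, p ∈ Finset.univ.offDiag →
      Tendsto (fun u => (μ {ω | s u < X p.1 ω ∧ v u < X p.2 ω}).toReal /
        tailP μ (maxRV X) u) atTop (𝓝 0)) :
    Tendsto (fun u => pairSum μ X (s u) (v u) / tailP μ (maxRV X) u) atTop (𝓝 0) := by
  have heq : (fun u => pairSum μ X (s u) (v u) / tailP μ (maxRV X) u) =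
      fun u => ∑ p ∈ Finset.univ.offDiag,
        (μ {ω | s u < X p.1 ω ∧ v u < X p.2 ω}).toReal / tailP μ (maxRV X) u := by
    funext u
    exact Finset.sum_div _ _ _
  rw [heq]
  have h0 : (0 : ℝ) = ∑ _p ∈ (Finset.univ : Finset (Fin n)).offDiag, (0:ℝ) := by simp
  rw [h0]
  exact tendsto_finset_sum _ hterm

private lemma exp_le_one_add {s : ℝ} (h0 : 0 ≤ s) (h2 : s ≤ 1/2) : Real.exp s ≤ 1 + 2*s := by
  have h1 := Real.add_one_le_exp (-s)
  rw [Real.exp_neg] at h1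
  have h4 : 0 < Real.exp s := Real.exp_pos s
  have h5 : Real.exp s * (-s + 1) ≤ 1 := by
    calc Real.exp s * (-s + 1) ≤ Real.exp s * (Real.exp s)⁻¹ :=
          mul_le_mul_of_nonneg_left (by linarith) h4.le
      _ = 1 := mul_inv_cancel₀ h4.ne'
  nlinarith

end Cases

section CaseB
open MeasureTheory
variable {Ω : Type*} [MeasurableSpace Ω] (μ : Measure Ω) [IsProbabilityMeasure μ]
variable {n : ℕ} [NeZero n] (X : Fin n → Ω → ℝ)

private lemma caseB_main (hXpos : ∀ i ω, 0 ≤ X i ω) (hXm : ∀ i, Measurable (X i))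
    {a b d : ℝ} (ha : 0 < a) (hab : a ≤ b) (hd : 0 ≤ d)
    (hB : AssumptionB μ X) :
    UnifMaxSum μ X
      {c : Fin n → ℝ | c 0 ∈ Set.Icc a b ∧ ∀ i : Fin n, i ≠ 0 → c i ∈ Set.Icc (-d) d} := by
  obtain ⟨⟨hTpos0, _⟩, h, ⟨hhpos, hho, hins, _⟩, _hDS1, L, hL, hDS2⟩ := hB
  set C : ℝ := (n : ℝ) * d / a with hC
  have hC0 : 0 ≤ C := by rw [hC]; positivity
  have hTpos : ∀ᶠ u in atTop, 0 < tailP μ (maxRV X) u := by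
    filter_upwards [eventually_ge_atTop (0:ℝ)] with u hu using hTpos0 u hu
  have hDS2' := DS2_symm μ X hDS2
  have hsmall : ∀ᶠ u in atTop, (C * L + L) * h u ≤ u := by
    have hcpos : (0:ℝ) < 1 / (C*L + L + 1) := by positivity
    filter_upwards [o_small hho hcpos, eventually_ge_atTop (0:ℝ), hhpos] with u h1 h2 h3
    have hCL : 0 ≤ C * L + L := by positivity
    have hkey : (C*L+L) * (1/(C*L+L+1)) ≤ 1 := by
      rw [mul_one_div]
      exact div_le_one_of_le₀ (by linarith) (by positivity)
    calc (C*L+L) * h u ≤ (C*L+L) * (1/(C*L+L+1) * u) := mul_le_mul_of_nonneg_left h1 hCL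
      _ = ((C*L+L) * (1/(C*L+L+1))) * u := by ring
      _ ≤ 1 * u := mul_le_mul_of_nonneg_right hkey h2
      _ = u := one_mul u
  have hvv_ge : ∀ᶠ u in atTop, L * h u ≤ u - C * (L * h u) := by
    filter_upwards [hsmall] with u h1
    have h2 : C*(L*h u) + L*h u = (C*L+L)*h u := by ring
    linarith
  have hSand : ∀ ε : ℝ, 0 < ε → ∀ᶠ u in atTop, ∀ c : Fin n → ℝ, a ≤ c 0 →
      (∀ i : Fin n, i ≠ 0 → |c i| ≤ d) →
      (1 - ε) * tailP μ (maxRV X) u ≤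
        tailP μ (fun ω => ∑ i, c i * ordDesc X i ω) (c 0 * u) ∧
      tailP μ (fun ω => ∑ i, c i * ordDesc X i ω) (c 0 * u) ≤
        (1 + ε) * tailP μ (maxRV X) u := by
    intro ε hε
    refine master μ X hXpos ha hd (fun u => L * h u) (fun u => L * h u)
      (fun u => u - C * (L * h u)) hε ?_ ?_ ?_ ?_ ?_ ?_ hTpos
    · filter_upwards [hhpos] with u hu; positivity
    · filter_upwards [hhpos] with u hu; positivity
    · exact Filter.Eventually.of_forall fun u => le_of_eq (by rw [hC])
    · have hB1 : Tendsto (fun u => pairSum μ X (L*h u) (L*h u) /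
          tailP μ (maxRV X) u) atTop (𝓝 0) :=
        pairSum_div_tendsto μ X fun p hp => hDS2' p.1 p.2 (Finset.mem_offDiag.mp hp).2.2
      have hB2 : Tendsto (fun u => pairSum μ X (L*h u) (u - C*(L*h u)) /
          tailP μ (maxRV X) u) atTop (𝓝 0) := by
        refine pairSum_div_tendsto μ X fun p hp => ?_
        refine ratio_tendsto_of_subset μ X ?_ (hDS2' p.1 p.2 (Finset.mem_offDiag.mp hp).2.2)
        filter_upwards [hvv_ge] with u h1
        intro ω hω
        exact ⟨hω.1, lt_of_le_of_lt h1 hω.2⟩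
      have hadd := hB1.add hB2
      rw [add_zero] at hadd
      have heq : (fun u => (pairSum μ X (L*h u) (L*h u) +
          pairSum μ X (L*h u) (u - C*(L*h u))) / tailP μ (maxRV X) u) =
          fun u => pairSum μ X (L*h u) (L*h u) / tailP μ (maxRV X) u +
            pairSum μ X (L*h u) (u - C*(L*h u)) / tailP μ (maxRV X) u := by
        funext u; rw [add_div]
      rw [heq]
      exact hadd
    · have hlim : Tendsto (fun u => tailP μ (maxRV X) (u - C*(L*h u)) /
          tailP μ (maxRV X) u) atTop (𝓝 1) := by
        have h1 := hins (-(C*L))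
        have heq : (fun u => tailP μ (maxRV X) (u + (-(C*L))*h u)/tailP μ (maxRV X) u) =
            fun u => tailP μ (maxRV X) (u - C*(L*h u))/tailP μ (maxRV X) u := by
          funext u; congr 2; ring
        rwa [heq] at h1
      filter_upwards [hlim.eventually_lt_const (by linarith : (1:ℝ) < 1 + ε/2), hTpos]
        with u h1 h2
      exact le_of_lt ((div_lt_iff₀ h2).mp h1)
    · have hlim : Tendsto (fun u => tailP μ (maxRV X) (u + C*(L*h u)) /
          tailP μ (maxRV X) u) atTop (𝓝 1) := by
        have h1 := hins (C*L)
        have heq : (fun u => tailP μ (maxRV X) (u + (C*L)*h u)/tailP μ (maxRV X) u) =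
            fun u => tailP μ (maxRV X) (u + C*(L*h u))/tailP μ (maxRV X) u := by
          funext u; congr 2; ring
        rwa [heq] at h1
      filter_upwards [hlim.eventually_const_lt (by linarith : 1 - ε/2 < 1), hTpos]
        with u h1 h2
      exact le_of_lt ((lt_div_iff₀ h2).mp h1)
  have hPair : ∀ i j : Fin n, i ≠ j → Tendsto (fun u =>
      (μ ({ω | u < X i ω} ∩ {ω | u < X j ω})).toReal / tailP μ (maxRV X) u) atTop (𝓝 0) := by
    intro i j hij
    refine ratio_tendsto_of_subset μ X ?_ (hDS2' i j hij)
    have hLu : ∀ᶠ u in atTop, L * h u ≤ u := by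
      filter_upwards [hsmall, hhpos] with u h1 h3
      nlinarith [mul_nonneg (mul_nonneg hC0 hL.le) h3.le]
    filter_upwards [hLu] with u h1 ω hω
    exact ⟨lt_of_le_of_lt h1 hω.1, lt_of_le_of_lt h1 hω.2⟩
  exact ⟨comp1 μ X ha hab hSand hTpos, comp2 μ X ha hab hXm hPair hTpos⟩

end CaseB

section CaseC
open MeasureTheory
variable {Ω : Type*} [MeasurableSpace Ω] (μ : Measure Ω) [IsProbabilityMeasure μ]
variable {n : ℕ} [NeZero n] (X : Fin n → Ω → ℝ)

private lemma domvar_extract {f : ℝ → ℝ}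
    (H : (0:EReal) < atTop.liminf fun x => ((f x : ℝ) : EReal)) :
    ∃ c : ℝ, 0 < c ∧ ∀ᶠ x in atTop, c < f x := by
  obtain ⟨m, hm0, hml⟩ := EReal.exists_between_coe_real H
  refine ⟨m, by exact_mod_cast hm0, ?_⟩
  filter_upwards [Filter.eventually_lt_of_lt_liminf hml] with x hx
  exact_mod_cast hx

private lemma ratio_tendsto_transfer {A B : ℝ → Set Ω} {w : ℝ → ℝ} {c : ℝ} (hc : 0 ≤ c)
    (hw : Tendsto w atTop atTop)
    (hsub : ∀ᶠ u in atTop, A u ⊆ B (w u))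
    (hTw : ∀ᶠ u in atTop, tailP μ (maxRV X) (w u) ≤ c * tailP μ (maxRV X) u)
    (hTwpos : ∀ᶠ u in atTop, 0 < tailP μ (maxRV X) (w u))
    (hB : Tendsto (fun x => (μ (B x)).toReal / tailP μ (maxRV X) x) atTop (𝓝 0)) :
    Tendsto (fun u => (μ (A u)).toReal / tailP μ (maxRV X) u) atTop (𝓝 0) := by
  have hcomp : Tendsto (fun u => (μ (B (w u))).toReal / tailP μ (maxRV X) (w u))
      atTop (𝓝 0) := hB.comp hw
  have hprod : Tendsto (fun u =>
      ((μ (B (w u))).toReal / tailP μ (maxRV X) (w u)) * c) atTop (𝓝 0) := by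
    simpa using hcomp.mul_const c
  refine squeeze_zero' (Filter.Eventually.of_forall fun u =>
    div_nonneg ENNReal.toReal_nonneg (tailP_nonneg μ _ _)) ?_ hprod
  filter_upwards [hsub, hTw, hTwpos] with u h1 h2 h3
  rcases (tailP_nonneg μ (maxRV X) u).eq_or_lt with h0 | h0
  · rw [← h0]
    simp only [div_zero]
    positivity
  · have hμ : (μ (A u)).toReal ≤ (μ (B (w u))).toReal :=
      ENNReal.toReal_le_toReal (measure_ne_top μ _) (measure_ne_top μ _) |>.mpr
        (measure_mono h1)
    calc (μ (A u)).toReal / tailP μ (maxRV X) u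
        ≤ (μ (B (w u))).toReal / tailP μ (maxRV X) u := (div_le_div_iff_of_pos_right h0).mpr hμ
      _ = ((μ (B (w u))).toReal / tailP μ (maxRV X) (w u)) *
            (tailP μ (maxRV X) (w u) / tailP μ (maxRV X) u) := by
          rw [div_mul_div_comm, mul_comm ((μ (B (w u))).toReal) (tailP μ (maxRV X) (w u))]
          rw [mul_div_mul_left _ _ h3.ne']
      _ ≤ ((μ (B (w u))).toReal / tailP μ (maxRV X) (w u)) * c := by
          refine mul_le_mul_of_nonneg_left ?_
            (div_nonneg ENNReal.toReal_nonneg (tailP_nonneg μ _ _))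
          rw [div_le_iff₀ h0]
          linarith [h2]

private lemma caseC_main (hXpos : ∀ i ω, 0 ≤ X i ω) (hXm : ∀ i, Measurable (X i))
    {a b d : ℝ} (ha : 0 < a) (hab : a ≤ b) (hd : 0 ≤ d)
    (hCC : AssumptionC μ X) :
    UnifMaxSum μ X
      {c : Fin n → ℝ | c 0 ∈ Set.Icc a b ∧ ∀ i : Fin n, i ≠ 0 → c i ∈ Set.Icc (-d) d} := by
  obtain ⟨⟨hTpos0, _⟩, hDT, h, hDh, ⟨hhpos, hho, hins, _⟩, hDS1⟩ := hCC
  set C : ℝ := (n : ℝ) * d / a with hC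
  have hC0 : 0 ≤ C := by rw [hC]; positivity
  set δ : ℝ := a / (2 * ((n:ℝ) * d + 1)) with hδdef
  have hnd : (0:ℝ) ≤ (n:ℝ) * d := by positivity
  have hδ : 0 < δ := by rw [hδdef]; positivity
  have hCδ : C * δ ≤ 1/2 := by
    have h1 : C * δ = ((n:ℝ)*d) / (2*((n:ℝ)*d+1)) := by
      rw [hC, hδdef]
      field_simp
    rw [h1, div_le_iff₀ (by positivity)]
    linarith
  have hTpos : ∀ᶠ u in atTop, 0 < tailP μ (maxRV X) u := by
    filter_upwards [eventually_ge_atTop (0:ℝ)] with u hu using hTpos0 u hu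
  have hhalf : Tendsto (fun u : ℝ => u/2) atTop atTop :=
    tendsto_id.atTop_div_const two_pos
  have hδt : Tendsto (fun u : ℝ => δ*u) atTop atTop :=
    (tendsto_id (α := ℝ)).const_mul_atTop hδ
  obtain ⟨c₂, hc₂, hc₂ev⟩ := domvar_extract (hDh 2 two_pos).1
  obtain ⟨c₄, hc₄, hc₄ev⟩ := domvar_extract (hDT 2 two_pos).1
  obtain ⟨c₅, hc₅, hc₅ev⟩ := domvar_extract (hDT (1/δ) (by positivity)).1
  -- E1 : c₂ * h (u/2) < h u  eventually
  have E1 : ∀ᶠ u in atTop, c₂ * h (u/2) < h u := by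
    filter_upwards [hhalf.eventually hc₂ev, hhalf.eventually hhpos] with u h1 h2
    have heq : u/2*2 = u := by ring
    rw [heq] at h1
    calc c₂ * h (u/2) < h u / h (u/2) * h (u/2) := by
          exact (mul_lt_mul_of_pos_right h1 h2)
      _ = h u := div_mul_cancel₀ _ h2.ne'
  have E2 : ∀ᶠ u in atTop, tailP μ (maxRV X) (u/2) ≤ (1/c₄) * tailP μ (maxRV X) u := by
    filter_upwards [hhalf.eventually hc₄ev, hhalf.eventually hTpos] with u h1 h2
    have heq : u/2*2 = u := by ring
    rw [heq] at h1
    have h3 : c₄ * tailP μ (maxRV X) (u/2) < tailP μ (maxRV X) u := by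
      calc c₄ * tailP μ (maxRV X) (u/2)
          < tailP μ (maxRV X) u / tailP μ (maxRV X) (u/2) * tailP μ (maxRV X) (u/2) :=
            mul_lt_mul_of_pos_right h1 h2
        _ = tailP μ (maxRV X) u := div_mul_cancel₀ _ h2.ne'
    rw [one_div, inv_mul_eq_div, le_div_iff₀ hc₄, mul_comm]
    exact h3.le
  have E3 : ∀ᶠ u in atTop, tailP μ (maxRV X) (δ*u) ≤ (1/c₅) * tailP μ (maxRV X) u := by
    filter_upwards [hδt.eventually hc₅ev, hδt.eventually hTpos] with u h1 h2
    have heq : δ*u*(1/δ) = u := by field_simp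
    rw [heq] at h1
    have h3 : c₅ * tailP μ (maxRV X) (δ*u) < tailP μ (maxRV X) u := by
      calc c₅ * tailP μ (maxRV X) (δ*u)
          < tailP μ (maxRV X) u / tailP μ (maxRV X) (δ*u) * tailP μ (maxRV X) (δ*u) :=
            mul_lt_mul_of_pos_right h1 h2
        _ = tailP μ (maxRV X) u := div_mul_cancel₀ _ h2.ne'
    rw [one_div, inv_mul_eq_div, le_div_iff₀ hc₅, mul_comm]
    exact h3.le
  have E4 : ∀ᶠ u in atTop, h (δ*u) ≤ δ*u := by
    have := hδt.eventually (o_small hho one_pos)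
    filter_upwards [this] with u h1
    linarith [h1]
  have E5 : ∀ᶠ u in atTop, h u ≤ u := by
    filter_upwards [o_small hho one_pos] with u h1
    linarith
  have hSand : ∀ ε : ℝ, 0 < ε → ∀ᶠ u in atTop, ∀ c : Fin n → ℝ, a ≤ c 0 →
      (∀ i : Fin n, i ≠ 0 → |c i| ≤ d) →
      (1 - ε) * tailP μ (maxRV X) u ≤
        tailP μ (fun ω => ∑ i, c i * ordDesc X i ω) (c 0 * u) ∧
      tailP μ (fun ω => ∑ i, c i * ordDesc X i ω) (c 0 * u) ≤
        (1 + ε) * tailP μ (maxRV X) u := by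
    intro ε hε
    refine master μ X hXpos ha hd h (fun u => δ * u) (fun u => u / 2) hε ?_ ?_ ?_ ?_ ?_ ?_ hTpos
    · filter_upwards [hhpos] with u hu; exact hu.le
    · filter_upwards [eventually_ge_atTop (0:ℝ)] with u hu; positivity
    · filter_upwards [eventually_ge_atTop (0:ℝ)] with u hu
      have : C * (δ * u) ≤ (1/2) * u := by
        calc C * (δ * u) = (C * δ) * u := by ring
          _ ≤ (1/2) * u := mul_le_mul_of_nonneg_right hCδ hu
      linarith
    · -- bad parts
      have hB1 : Tendsto (fun u => pairSum μ X (δ*u) (δ*u) /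
          tailP μ (maxRV X) u) atTop (𝓝 0) := by
        refine pairSum_div_tendsto μ X fun p hp => ?_
        have hne := (Finset.mem_offDiag.mp hp).2.2
        refine ratio_tendsto_transfer μ X (c := 1/c₅) (by positivity)
          (w := fun u => δ*u)
          (B := fun x => {ω | 1 * h x < |X p.1 ω| ∧ x < X p.2 ω})
          hδt ?_ E3 (hδt.eventually hTpos) (hDS1 1 one_pos p.1 p.2 hne)
        filter_upwards [E4] with u h1 ω hω
        refine ⟨?_, hω.2⟩
        rw [one_mul]
        exact lt_of_le_of_lt h1 (lt_of_lt_of_le hω.1 (le_abs_self _))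
      have hB2 : Tendsto (fun u => pairSum μ X (h u) (u/2) /
          tailP μ (maxRV X) u) atTop (𝓝 0) := by
        refine pairSum_div_tendsto μ X fun p hp => ?_
        have hne := (Finset.mem_offDiag.mp hp).2.2
        refine ratio_tendsto_transfer μ X (c := 1/c₄) (by positivity)
          (w := fun u => u/2)
          (B := fun x => {ω | c₂ * h x < |X p.1 ω| ∧ x < X p.2 ω})
          hhalf ?_ E2 (hhalf.eventually hTpos) (hDS1 c₂ hc₂ p.1 p.2 hne)
        filter_upwards [E1] with u h1 ω hω
        exact ⟨lt_of_lt_of_le (lt_of_lt_of_le h1 (le_of_lt hω.1)) (le_abs_self _), hω.2⟩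
      have hadd := hB1.add hB2
      rw [add_zero] at hadd
      have heq : (fun u => (pairSum μ X (δ*u) (δ*u) + pairSum μ X (h u) (u/2)) /
          tailP μ (maxRV X) u) =
          fun u => pairSum μ X (δ*u) (δ*u) / tailP μ (maxRV X) u +
            pairSum μ X (h u) (u/2) / tailP μ (maxRV X) u := by
        funext u; rw [add_div]
      rw [heq]
      exact hadd
    · have hlim : Tendsto (fun u => tailP μ (maxRV X) (u - C * h u) /
          tailP μ (maxRV X) u) atTop (𝓝 1) := by
        have h1 := hins (-C)
        have heq : (fun u => tailP μ (maxRV X) (u + (-C)*h u)/tailP μ (maxRV X) u) =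
            fun u => tailP μ (maxRV X) (u - C*h u)/tailP μ (maxRV X) u := by
          funext u; congr 2; ring
        rwa [heq] at h1
      filter_upwards [hlim.eventually_lt_const (by linarith : (1:ℝ) < 1 + ε/2), hTpos]
        with u h1 h2
      exact le_of_lt ((div_lt_iff₀ h2).mp h1)
    · have hlim : Tendsto (fun u => tailP μ (maxRV X) (u + C * h u) /
          tailP μ (maxRV X) u) atTop (𝓝 1) := by
        have h1 := hins C
        exact h1
      filter_upwards [hlim.eventually_const_lt (by linarith : 1 - ε/2 < 1), hTpos]
        with u h1 h2
      exact le_of_lt ((lt_div_iff₀ h2).mp h1)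
  have hPair : ∀ i j : Fin n, i ≠ j → Tendsto (fun u =>
      (μ ({ω | u < X i ω} ∩ {ω | u < X j ω})).toReal / tailP μ (maxRV X) u) atTop (𝓝 0) := by
    intro i j hij
    refine ratio_tendsto_of_subset μ X ?_ (hDS1 1 one_pos i j hij)
    filter_upwards [E5] with u h1 ω hω
    refine ⟨?_, hω.2⟩
    rw [one_mul]
    exact lt_of_le_of_lt h1 (lt_of_lt_of_le hω.1 (le_abs_self _))
  exact ⟨comp1 μ X ha hab hSand hTpos, comp2 μ X ha hab hXm hPair hTpos⟩

end CaseC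

section CaseA
open MeasureTheory
variable {Ω : Type*} [MeasurableSpace Ω] (μ : Measure Ω) [IsProbabilityMeasure μ]
variable {n : ℕ} [NeZero n] (X : Fin n → Ω → ℝ)

private lemma shift_tendsto_atTop {h : ℝ → ℝ} (hhpos : ∀ x, 0 < h x)
    (h_o : ∀ c : ℝ, 0 < c → ∀ᶠ u in atTop, h u ≤ c * u) (y : ℝ) :
    Tendsto (fun u => u + y * h u) atTop atTop := by
  refine tendsto_atTop_mono' atTop ?_ ((tendsto_id (α := ℝ)).atTop_div_const two_pos)
  have hc : (0:ℝ) < 1/(2*(|y|+1)) := by positivity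
  filter_upwards [h_o _ hc, eventually_ge_atTop (0:ℝ)] with u h1 h2
  have h3 : |y| * h u ≤ u/2 := by
    calc |y| * h u ≤ |y| * (1/(2*(|y|+1)) * u) := mul_le_mul_of_nonneg_left h1 (abs_nonneg y)
      _ = (|y|/(2*(|y|+1))) * u := by ring
      _ ≤ (1/2) * u := by
          refine mul_le_mul_of_nonneg_right ?_ h2
          rw [div_le_div_iff₀ (by positivity) (by norm_num)]
          nlinarith [abs_nonneg y]
      _ = u/2 := by ring
  have h4 : -(|y| * h u) ≤ y * h u := by
    have h5 := neg_abs_le (y * h u)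
    rwa [abs_mul, abs_of_pos (hhpos u)] at h5
  simp only [id_eq]
  linarith

private lemma gmda_selfneg
    (hTanti : Antitone (tailP μ (maxRV X)))
    (hTpos0 : ∀ x, 0 < tailP μ (maxRV X) x)
    {h : ℝ → ℝ} (hhpos : ∀ x, 0 < h x)
    (hG : ∀ y : ℝ, Tendsto (fun x => tailP μ (maxRV X) (x + y * h x) / tailP μ (maxRV X) x)
      atTop (𝓝 (Real.exp (-y))))
    (h_o : ∀ c : ℝ, 0 < c → ∀ᶠ u in atTop, h u ≤ c * u)
    (y : ℝ) :
    Tendsto (fun u => h (u + y * h u) / h u) atTop (𝓝 1) := by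
  set w : ℝ → ℝ := fun u => u + y * h u with hwdef
  have hwtop : Tendsto w atTop atTop := shift_tendsto_atTop hhpos h_o y
  have hdivdiv : ∀ (A B Cv : ℝ), Cv ≠ 0 → A/Cv/(B/Cv) = A/B := by
    intro A B Cv hCv
    calc A/Cv/(B/Cv) = A/Cv*Cv/B := div_div_eq_mul_div _ _ _
      _ = A/B := by rw [div_mul_cancel₀ _ hCv]
  have F1 : ∀ z : ℝ, Tendsto (fun u =>
      tailP μ (maxRV X) (w u + z * h u) / tailP μ (maxRV X) (w u)) atTop
      (𝓝 (Real.exp (-z))) := by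
    intro z
    have hq := (hG (y+z)).div (hG y) (Real.exp_ne_zero _)
    have hlim : Real.exp (-(y+z)) / Real.exp (-y) = Real.exp (-z) := by
      rw [← Real.exp_sub]; ring_nf
    rw [hlim] at hq
    refine hq.congr fun u => ?_
    show (tailP μ (maxRV X) (u + (y+z) * h u) / tailP μ (maxRV X) u) /
        (tailP μ (maxRV X) (u + y * h u) / tailP μ (maxRV X) u) =
        tailP μ (maxRV X) (w u + z * h u) / tailP μ (maxRV X) (w u)
    rw [hdivdiv _ _ _ (hTpos0 u).ne']
    congr 2
    ring
  have F2 : ∀ z : ℝ, Tendsto (fun u =>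
      tailP μ (maxRV X) (w u + z * h (w u)) / tailP μ (maxRV X) (w u)) atTop
      (𝓝 (Real.exp (-z))) := fun z => (hG z).comp hwtop
  rw [tendsto_order]
  constructor
  · intro lam hlam
    by_contra hcon
    have hfreq : ∃ᶠ u in atTop, h (w u) / h u ≤ lam := by
      simpa using Filter.not_eventually.mp hcon
    set δ := (Real.exp (-lam) - Real.exp (-1))/2 with hδdef
    have hδpos : 0 < δ := by
      have := Real.exp_lt_exp.mpr (neg_lt_neg hlam)
      rw [hδdef]; linarith
    have hev1 := (F1 lam).eventually_const_lt
      (show Real.exp (-lam) - δ < Real.exp (-lam) by linarith)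
    have hev2 := (F2 1).eventually_lt_const
      (show Real.exp (-1) < Real.exp (-1) + δ by linarith)
    obtain ⟨u, hru, h1, h2⟩ := (hfreq.and_eventually (hev1.and hev2)).exists
    have hhu := hhpos u
    have hmul : h (w u) ≤ lam * h u := (div_le_iff₀ hhu).mp hru
    have hT : tailP μ (maxRV X) (w u + lam * h u) ≤
        tailP μ (maxRV X) (w u + 1 * h (w u)) := tailP_antitone μ _ (by linarith [one_mul (h (w u))])
    have hTwu := hTpos0 (w u)
    have hdiv : tailP μ (maxRV X) (w u + lam * h u) / tailP μ (maxRV X) (w u) ≤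
        tailP μ (maxRV X) (w u + 1 * h (w u)) / tailP μ (maxRV X) (w u) :=
      (div_le_div_iff_of_pos_right hTwu).mpr hT
    rw [hδdef] at h1 h2
    linarith
  · intro lam hlam
    by_contra hcon
    have hfreq : ∃ᶠ u in atTop, lam ≤ h (w u) / h u := by
      simpa using Filter.not_eventually.mp hcon
    set δ := (Real.exp (-1) - Real.exp (-lam))/2 with hδdef
    have hδpos : 0 < δ := by
      have := Real.exp_lt_exp.mpr (neg_lt_neg hlam)
      rw [hδdef]; linarith
    have hev1 := (F2 1).eventually_const_lt
      (show Real.exp (-1) - δ < Real.exp (-1) by linarith)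
    have hev2 := (F1 lam).eventually_lt_const
      (show Real.exp (-lam) < Real.exp (-lam) + δ by linarith)
    obtain ⟨u, hru, h1, h2⟩ := (hfreq.and_eventually (hev1.and hev2)).exists
    have hhu := hhpos u
    have hmul : lam * h u ≤ h (w u) := (le_div_iff₀ hhu).mp hru
    have hT : tailP μ (maxRV X) (w u + 1 * h (w u)) ≤
        tailP μ (maxRV X) (w u + lam * h u) := tailP_antitone μ _ (by linarith [one_mul (h (w u))])
    have hTwu := hTpos0 (w u)
    have hdiv : tailP μ (maxRV X) (w u + 1 * h (w u)) / tailP μ (maxRV X) (w u) ≤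
        tailP μ (maxRV X) (w u + lam * h u) / tailP μ (maxRV X) (w u) :=
      (div_le_div_iff_of_pos_right hTwu).mpr hT
    rw [hδdef] at h1 h2
    linarith

private lemma caseA_main (hXpos : ∀ i ω, 0 ≤ X i ω) (hXm : ∀ i, Measurable (X i))
    {a b d : ℝ} (ha : 0 < a) (hab : a ≤ b) (hd : 0 ≤ d)
    (hA : AssumptionA μ X) :
    UnifMaxSum μ X
      {c : Fin n → ℝ | c 0 ∈ Set.Icc a b ∧ ∀ i : Fin n, i ≠ 0 → c i ∈ Set.Icc (-d) d} := by
  obtain ⟨h, hTpos0, ⟨hhpos, hGfilt⟩, hDS1, L, hL, hDS2⟩ := hA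
  have hEnd : endFilter (tailP μ (maxRV X)) = atTop := by
    have hupEnd : upEnd (tailP μ (maxRV X)) = ⊤ := by
      rw [upEnd, sSup_eq_top]
      intro bb hbb
      obtain ⟨r, hbr, _⟩ := EReal.exists_between_coe_real hbb
      exact ⟨(r : EReal), ⟨r, hTpos0 r, rfl⟩, hbr⟩
    rw [endFilter, if_pos hupEnd]
  have hG : ∀ y : ℝ, Tendsto (fun x => tailP μ (maxRV X) (x + y * h x) / tailP μ (maxRV X) x)
      atTop (𝓝 (Real.exp (-y))) := by
    intro y
    have := hGfilt y
    rwa [hEnd] at this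
  have hTanti := tailP_antitone μ (maxRV X)
  have hT0 := tailP_tendsto_zero μ (maxRV_measurable X hXm)
  have hTpos : ∀ᶠ u in atTop, 0 < tailP μ (maxRV X) u :=
    Filter.Eventually.of_forall fun u => hTpos0 u
  have h_o : ∀ c : ℝ, 0 < c → ∀ᶠ u in atTop, h u ≤ c * u := by
    intro c hc
    by_contra hcon
    have hfreq : ∃ᶠ u in atTop, c * u < h u := by
      simpa using Filter.not_eventually.mp hcon
    set E := Real.exp (1/c) + 1 with hE
    have hEpos : 0 < E := by rw [hE]; positivity
    have hev1 : ∀ᶠ u in atTop,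
        tailP μ (maxRV X) (u + (-(1/c)) * h u) / tailP μ (maxRV X) u < E := by
      refine (hG (-(1/c))).eventually_lt_const ?_
      rw [hE, neg_neg]
      linarith
    have hev2 : ∀ᶠ u in atTop, tailP μ (maxRV X) u < tailP μ (maxRV X) 0 / E :=
      hT0.eventually_lt_const (div_pos (hTpos0 0) hEpos)
    obtain ⟨u, hcu, h1, h2⟩ := (hfreq.and_eventually (hev1.and hev2)).exists
    have hpt : u + (-(1/c)) * h u ≤ 0 := by
      have h3 : u < h u / c := by rw [lt_div_iff₀ hc]; nlinarith
      have h4 : (-(1/c)) * h u = -(h u / c) := by ring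
      rw [h4]; linarith
    have hTpt : tailP μ (maxRV X) 0 ≤ tailP μ (maxRV X) (u + (-(1/c)) * h u) := hTanti hpt
    have hTu := hTpos0 u
    rw [div_lt_iff₀ hTu] at h1
    rw [lt_div_iff₀ hEpos] at h2
    have hcomm : E * tailP μ (maxRV X) u = tailP μ (maxRV X) u * E := mul_comm _ _
    rw [hcomm] at h1
    exact absurd (lt_trans (lt_of_le_of_lt hTpt h1) h2) (lt_irrefl _)
  set C : ℝ := (n : ℝ) * d / a with hC
  have hC0 : 0 ≤ C := by rw [hC]; positivity
  have hDS2' := DS2_symm μ X hDS2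
  set yA : ℝ := -(C * L) with hyA
  have hsn := gmda_selfneg μ X hTanti hTpos0 hhpos hG h_o yA
  have hwtop : Tendsto (fun u => u + yA * h u) atTop atTop := shift_tendsto_atTop hhpos h_o yA
  have hTratio : Tendsto (fun u => tailP μ (maxRV X) (u + yA * h u) / tailP μ (maxRV X) u)
      atTop (𝓝 (Real.exp (C * L))) := by
    have := hG yA
    rwa [hyA, neg_neg] at this
  have hSand : ∀ ε : ℝ, 0 < ε → ∀ᶠ u in atTop, ∀ c : Fin n → ℝ, a ≤ c 0 →
      (∀ i : Fin n, i ≠ 0 → |c i| ≤ d) →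
      (1 - ε) * tailP μ (maxRV X) u ≤
        tailP μ (fun ω => ∑ i, c i * ordDesc X i ω) (c 0 * u) ∧
      tailP μ (fun ω => ∑ i, c i * ordDesc X i ω) (c 0 * u) ≤
        (1 + ε) * tailP μ (maxRV X) u := by
    intro ε hε
    set t := min (1/2 : ℝ) (ε/8) with ht
    have ht0 : 0 < t := lt_min (by norm_num) (by linarith)
    have ht12 : t ≤ 1/2 := min_le_left _ _
    have ht8 : t ≤ ε/8 := min_le_right _ _
    set ε' := t/(C+1) with hε'def
    have hε'0 : 0 < ε' := by rw [hε'def]; positivity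
    have hCε' : C * ε' ≤ t := by
      calc C * ε' = t * (C/(C+1)) := by rw [hε'def]; ring
        _ ≤ t * 1 := mul_le_mul_of_nonneg_left ((div_le_one (by linarith)).mpr (by linarith)) ht0.le
        _ = t := mul_one t
    have hCε'0 : 0 ≤ C * ε' := by positivity
    have hexpU : Real.exp (C * ε') < 1 + ε/2 := by
      calc Real.exp (C * ε') ≤ Real.exp t := Real.exp_le_exp.mpr hCε'
        _ ≤ 1 + 2*t := exp_le_one_add ht0.le ht12
        _ < 1 + ε/2 := by linarith
    have hexpL : 1 - ε/2 < Real.exp (-(C * ε')) := by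
      have := Real.add_one_le_exp (-(C * ε'))
      linarith
    have hmaster := master μ X hXpos ha hd (fun u => ε' * h u) (fun u => L * h u)
      (fun u => u + yA * h u) hε (ε := ε)
    rw [← hC] at hmaster
    refine hmaster ?_ ?_ ?_ ?_ ?_ ?_ hTpos
    · exact Filter.Eventually.of_forall fun u => mul_nonneg hε'0.le (hhpos u).le
    · exact Filter.Eventually.of_forall fun u => mul_nonneg hL.le (hhpos u).le
    · refine Filter.Eventually.of_forall fun u => le_of_eq ?_
      rw [hyA]; ring
    · have hB1 : Tendsto (fun u => pairSum μ X (L * h u) (L * h u) /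
          tailP μ (maxRV X) u) atTop (𝓝 0) :=
        pairSum_div_tendsto μ X fun p hp => hDS2' p.1 p.2 (Finset.mem_offDiag.mp hp).2.2
      have hB2 : Tendsto (fun u => pairSum μ X (ε' * h u) (u + yA * h u) /
          tailP μ (maxRV X) u) atTop (𝓝 0) := by
        refine pairSum_div_tendsto μ X fun p hp => ?_
        have hne := (Finset.mem_offDiag.mp hp).2.2
        refine ratio_tendsto_transfer μ X (c := Real.exp (C * L) + 1) (by positivity)
          (w := fun u => u + yA * h u)
          (B := fun x => {ω | (ε'/2) * h x < |X p.1 ω| ∧ x < X p.2 ω})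
          hwtop ?_ ?_ (Filter.Eventually.of_forall fun u => hTpos0 _)
          (hDS1 (ε'/2) (by linarith) p.1 p.2 hne)
        · filter_upwards [hsn.eventually_lt_const (by norm_num : (1:ℝ) < 2)] with u h1 ω hω
          have hhu := hhpos u
          have h2 : h (u + yA * h u) < 2 * h u := by
            rw [div_lt_iff₀ hhu] at h1
            linarith
          refine ⟨?_, hω.2⟩
          have h3 : (ε'/2) * h (u + yA * h u) ≤ ε' * h u := by nlinarith [hhpos (u + yA * h u)]
          exact lt_of_le_of_lt h3 (lt_of_lt_of_le hω.1 (le_abs_self _))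
        · filter_upwards [hTratio.eventually_lt_const
            (by linarith [Real.exp_pos (C*L)] : Real.exp (C*L) < Real.exp (C*L) + 1),
            hTpos] with u h1 h2
          exact le_of_lt ((div_lt_iff₀ h2).mp h1)
      have hadd := hB1.add hB2
      rw [add_zero] at hadd
      have heq : (fun u => (pairSum μ X (L * h u) (L * h u) +
          pairSum μ X (ε' * h u) (u + yA * h u)) / tailP μ (maxRV X) u) =
          fun u => pairSum μ X (L * h u) (L * h u) / tailP μ (maxRV X) u +
            pairSum μ X (ε' * h u) (u + yA * h u) / tailP μ (maxRV X) u := by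
        funext u; rw [add_div]
      rw [heq]
      exact hadd
    · have hlim : Tendsto (fun u => tailP μ (maxRV X) (u - C * (ε' * h u)) /
          tailP μ (maxRV X) u) atTop (𝓝 (Real.exp (C * ε'))) := by
        have h1 := hG (-(C * ε'))
        rw [neg_neg] at h1
        have heq : (fun u => tailP μ (maxRV X) (u + (-(C * ε')) * h u) / tailP μ (maxRV X) u) =
            fun u => tailP μ (maxRV X) (u - C * (ε' * h u)) / tailP μ (maxRV X) u := by
          funext u; congr 2; ring
        rwa [heq] at h1
      filter_upwards [hlim.eventually_lt_const hexpU, hTpos] with u h1 h2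
      exact le_of_lt ((div_lt_iff₀ h2).mp h1)
    · have hlim : Tendsto (fun u => tailP μ (maxRV X) (u + C * (ε' * h u)) /
          tailP μ (maxRV X) u) atTop (𝓝 (Real.exp (-(C * ε')))) := by
        have h1 := hG (C * ε')
        have heq : (fun u => tailP μ (maxRV X) (u + (C * ε') * h u) / tailP μ (maxRV X) u) =
            fun u => tailP μ (maxRV X) (u + C * (ε' * h u)) / tailP μ (maxRV X) u := by
          funext u; congr 2; ring
        rwa [heq] at h1
      filter_upwards [hlim.eventually_const_lt hexpL, hTpos] with u h1 h2
      exact le_of_lt ((lt_div_iff₀ h2).mp h1)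
  have hPair : ∀ i j : Fin n, i ≠ j → Tendsto (fun u =>
      (μ ({ω | u < X i ω} ∩ {ω | u < X j ω})).toReal / tailP μ (maxRV X) u) atTop (𝓝 0) := by
    intro i j hij
    refine ratio_tendsto_of_subset μ X ?_ (hDS2' i j hij)
    have hLu : ∀ᶠ u in atTop, L * h u ≤ u := by
      have hcpos : (0:ℝ) < 1/(L+1) := by positivity
      filter_upwards [h_o _ hcpos, eventually_ge_atTop (0:ℝ)] with u h1 h2
      have h3 : L * h u ≤ L * (1/(L+1) * u) := mul_le_mul_of_nonneg_left h1 hL.le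
      have h4 : L * (1/(L+1) * u) ≤ u := by
        rw [show L * (1/(L+1) * u) = (L/(L+1)) * u by ring]
        calc (L/(L+1)) * u ≤ 1 * u :=
              mul_le_mul_of_nonneg_right ((div_le_one (by linarith)).mpr (by linarith)) h2
          _ = u := one_mul u
      linarith
    filter_upwards [hLu] with u h1 ω hω
    exact ⟨lt_of_le_of_lt h1 hω.1, lt_of_le_of_lt h1 hω.2⟩
  exact ⟨comp1 μ X ha hab hSand hTpos, comp2 μ X ha hab hXm hPair hTpos⟩

end CaseA

end WOS



/-- Corollary 3.1, nonnegative risks and possibly negative weights. -/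
theorem weighted_order_stats_tail_nonneg_signed_weights
    {Ω : Type*} [MeasurableSpace Ω] (μ : Measure Ω) [IsProbabilityMeasure μ]
    {n : ℕ} [NeZero n] (X : Fin n → Ω → ℝ) (hXm : ∀ i, Measurable (X i))
    (hXpos : ∀ i ω, 0 ≤ X i ω)
    (hABC : AssumptionA μ X ∨ AssumptionB μ X ∨ AssumptionC μ X)
    (a b d : ℝ) (ha : 0 < a) (hab : a ≤ b) (hd : 0 ≤ d) :
    UnifMaxSum μ X
      {c : Fin n → ℝ | c 0 ∈ Set.Icc a b ∧ ∀ i : Fin n, i ≠ 0 → c i ∈ Set.Icc (-d) d} := by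
  rcases hABC with hA | hB | hC
  · exact WOS.caseA_main μ X hXpos hXm ha hab hd hA
  · exact WOS.caseB_main μ X hXpos hXm ha hab hd hB
  · exact WOS.caseC_main μ X hXpos hXm ha hab hd hC
end

section
/- Let X_1,...,X_n be n real-valued, mutually independent random variables whose maximum X_{n:n} = max(X_1,...,X_n) is long-tailed (X_{n:n} ∈ 𝓛). Suppose there exists a function h ∈ 𝓗*_{X_{n:n}} (so in particular h(x) → ∞) such that condition (IDS2) holds: lim_{x→∞} P(X_i > L h(x)) · P(X_j > L h(x)) / P(X_{n:n} > x) = 0 for all 1 ≤ i ≠ j ≤ n and some L > 0. Then X_1,...,X_n are max-sum equivalent: P(∑_{i=1}^{n} X_i > x) ~ ∑_{i=1}^{n} P(X_i > x) as x → ∞. -/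
open MeasureTheory Filter Topology Asymptotics

section Aux
variable {Ω : Type*} [MeasurableSpace Ω] {μ : Measure Ω} [IsFiniteMeasure μ]

lemma toReal_meas_mono {A B : Set Ω} (h : A ⊆ B) : (μ A).toReal ≤ (μ B).toReal :=
  ENNReal.toReal_mono (measure_ne_top μ B) (measure_mono h)

lemma toReal_meas_biUnion_le {ι : Type*} (s : Finset ι) (A : ι → Set Ω) :
    (μ (⋃ i ∈ s, A i)).toReal ≤ ∑ i ∈ s, (μ (A i)).toReal := by
  refine le_trans (ENNReal.toReal_mono ?_ (measure_biUnion_finset_le s A)) ?_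
  · exact (ENNReal.sum_lt_top.mpr fun i _ => measure_lt_top μ (A i)).ne
  · rw [ENNReal.toReal_sum fun i _ => measure_ne_top μ (A i)]

lemma toReal_meas_union_le (A B : Set Ω) :
    (μ (A ∪ B)).toReal ≤ (μ A).toReal + (μ B).toReal := by
  refine le_trans (ENNReal.toReal_mono ?_ (measure_union_le A B)) ?_
  · exact (ENNReal.add_lt_top.mpr ⟨measure_lt_top μ A, measure_lt_top μ B⟩).ne
  · rw [ENNReal.toReal_add (measure_ne_top _ _) (measure_ne_top _ _)]

lemma toReal_union_add_inter (A B : Set Ω) (hB : MeasurableSet B) :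
    (μ (A ∪ B)).toReal + (μ (A ∩ B)).toReal = (μ A).toReal + (μ B).toReal := by
  rw [← ENNReal.toReal_add (measure_ne_top _ _) (measure_ne_top _ _),
    ← ENNReal.toReal_add (measure_ne_top _ _) (measure_ne_top _ _),
    measure_union_add_inter A hB]

lemma bonferroni {ι : Type*} [DecidableEq ι] (A : ι → Set Ω)
    (hA : ∀ i, MeasurableSet (A i)) (s : Finset ι) :
    ∑ i ∈ s, (μ (A i)).toReal ≤ (μ (⋃ i ∈ s, A i)).toReal
      + ∑ i ∈ s, ∑ j ∈ s.erase i, (μ (A i ∩ A j)).toReal := by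
  classical
  induction s using Finset.induction_on with
  | empty => simp
  | @insert a s ha ih =>
    have hUm : MeasurableSet (⋃ i ∈ s, A i) :=
      MeasurableSet.biUnion s.countable_toSet fun i _ => hA i
    have key := toReal_union_add_inter (μ := μ) (A a) (⋃ i ∈ s, A i) hUm
    have hsub : (μ (A a ∩ ⋃ i ∈ s, A i)).toReal ≤ ∑ j ∈ s, (μ (A a ∩ A j)).toReal := by
      rw [Set.inter_iUnion₂]
      exact toReal_meas_biUnion_le s _
    have hD : ∑ i ∈ s, ∑ j ∈ s.erase i, (μ (A i ∩ A j)).toReal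
        ≤ ∑ i ∈ s, ∑ j ∈ (insert a s).erase i, (μ (A i ∩ A j)).toReal := by
      refine Finset.sum_le_sum fun i hi => ?_
      refine Finset.sum_le_sum_of_subset_of_nonneg ?_ fun _ _ _ => ENNReal.toReal_nonneg
      exact Finset.erase_subset_erase i (Finset.subset_insert a s)
    have hunion : (⋃ i ∈ insert a s, A i) = A a ∪ ⋃ i ∈ s, A i := by
      simp [Set.iUnion_iUnion_eq_or_left]
    rw [Finset.sum_insert ha, Finset.sum_insert ha, Finset.erase_insert ha, hunion]
    linarith [ih]
end Aux

set_option maxHeartbeats 1000000 in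
open ProbabilityTheory in
/-- Corollary 3.3(b): independent risks with long-tailed maximum, some
`h ∈ 𝓗*_{X_{n:n}}` satisfying (IDS2), are max-sum equivalent. -/
theorem max_sum_equivalent_of_scale_class
    {Ω : Type*} [MeasurableSpace Ω] (μ : Measure Ω) [IsProbabilityMeasure μ]
    {n : ℕ} [NeZero n] (X : Fin n → Ω → ℝ) (hXm : ∀ i, Measurable (X i))
    (hindep : iIndepFun (m := fun _ : Fin n => Real.measurableSpace) X μ)
    (hL : LongTailedT (tailP μ (maxRV X)))
    (h : ℝ → ℝ) (hH : MemScaleClass (tailP μ (maxRV X)) h)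
    (hinf : Tendsto h atTop atTop)
    (hIDS2 : ∃ L : ℝ, 0 < L ∧ ∀ i j : Fin n, i ≠ j →
      Tendsto (fun x =>
          tailP μ (X i) (L * h x) * tailP μ (X j) (L * h x) / tailP μ (maxRV X) x)
        atTop (𝓝 0)) :
    Tendsto (fun x =>
        tailP μ (fun ω => ∑ i, X i ω) x / ∑ i, tailP μ (X i) x) atTop (𝓝 1) := by
  classical
  obtain ⟨L, hLpos, hIDS⟩ := hIDS2
  haveI : Nonempty (Fin n) := Fin.pos_iff_nonempty.mp (Nat.pos_of_ne_zero (NeZero.ne n))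
  set T : ℝ → ℝ := tailP μ (maxRV X) with hTdef
  set S : ℝ → ℝ := fun x => ∑ i, tailP μ (X i) x with hSdef
  set G : ℝ → ℝ := tailP μ (fun ω => ∑ i, X i ω) with hGdef
  set N : ℝ → ℝ := fun x => ∑ i, ∑ j ∈ Finset.univ.erase i,
      tailP μ (X i) (L * h x) * tailP μ (X j) (L * h x) with hNdef
  set δ : ℝ → ℝ := fun x => ∑ i, (μ {ω | X i ω ≤ -(L * h x)}).toReal with hδdef
  have hA : ∀ (i : Fin n) (a : ℝ), MeasurableSet (X i ⁻¹' Set.Ioi a) := fun i a =>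
    (hXm i) measurableSet_Ioi
  have hmaxset : ∀ x : ℝ, {ω | x < maxRV X ω} = ⋃ i, X i ⁻¹' Set.Ioi x := by
    intro x; ext ω
    simp only [Set.mem_setOf_eq, Set.mem_iUnion, maxRV, Set.mem_preimage, Set.mem_Ioi]
    exact lt_ciSup_iff (Set.finite_range _).bddAbove
  have hprod : ∀ (i j : Fin n), i ≠ j → ∀ A B : Set ℝ, MeasurableSet A → MeasurableSet B →
      (μ (X i ⁻¹' A ∩ X j ⁻¹' B)).toReal = (μ (X i ⁻¹' A)).toReal * (μ (X j ⁻¹' B)).toReal := by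
    intro i j hij A B hAm hBm
    rw [(hindep.indepFun hij).measure_inter_preimage_eq_mul A B hAm hBm, ENNReal.toReal_mul]
  have htailP_eq : ∀ (i : Fin n) (a : ℝ), tailP μ (X i) a = (μ (X i ⁻¹' Set.Ioi a)).toReal :=
    fun i a => rfl
  have htail_anti : ∀ (i : Fin n) (a b : ℝ), a ≤ b → tailP μ (X i) b ≤ tailP μ (X i) a :=
    fun i a b hab => toReal_meas_mono fun ω hw => lt_of_le_of_lt hab hw
  have htail_nonneg : ∀ (i : Fin n) (a : ℝ), 0 ≤ tailP μ (X i) a :=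
    fun _ _ => ENNReal.toReal_nonneg
  have hNnn : ∀ x, 0 ≤ N x := fun x =>
    Finset.sum_nonneg fun i _ => Finset.sum_nonneg fun j _ =>
      mul_nonneg (htail_nonneg _ _) (htail_nonneg _ _)
  have hTS : ∀ x : ℝ, T x ≤ S x := by
    intro x
    have h1 : T x = (μ (⋃ i, X i ⁻¹' Set.Ioi x)).toReal := by
      rw [hTdef]; unfold tailP; rw [hmaxset]
    rw [h1, hSdef]
    have h2 := toReal_meas_biUnion_le (μ := μ) Finset.univ (fun i => X i ⁻¹' Set.Ioi x)
    simpa [htailP_eq] using h2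
  -- N / T → 0
  have hNT : Tendsto (fun x => N x / T x) atTop (𝓝 0) := by
    have hten : Tendsto (fun x => ∑ i, ∑ j ∈ Finset.univ.erase i,
        tailP μ (X i) (L * h x) * tailP μ (X j) (L * h x) / T x) atTop
        (𝓝 (∑ i : Fin n, ∑ j ∈ Finset.univ.erase i, (0:ℝ))) := by
      refine tendsto_finset_sum _ fun i _ => tendsto_finset_sum _ fun j hj => ?_
      exact hIDS i j (Finset.ne_of_mem_erase hj).symm
    simp only [Finset.sum_const_zero] at hten
    refine hten.congr fun x => ?_
    simp only [hNdef, Finset.sum_div]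
  -- δ → 0
  have hδ0 : Tendsto δ atTop (𝓝 0) := by
    have hone : ∀ i : Fin n,
        Tendsto (fun x => (μ {ω | X i ω ≤ -(L * h x)}).toReal) atTop (𝓝 0) := by
      intro i
      have hbot : Tendsto (fun x : ℝ => -(L * h x)) atTop atBot :=
        tendsto_neg_atTop_atBot.comp (hinf.const_mul_atTop hLpos)
      have hmeas : Tendsto (fun t : ℝ => μ {ω | X i ω ≤ t}) atBot (𝓝 0) := by
        have h1 := tendsto_measure_iInter_atBot (μ := μ) (s := fun t : ℝ => {ω | X i ω ≤ t})
          (fun t => (measurableSet_le (hXm i) measurable_const).nullMeasurableSet)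
          (fun a b hab ω hω => le_trans hω hab) ⟨0, measure_ne_top _ _⟩
        have hempty : ⋂ t : ℝ, {ω | X i ω ≤ t} = ∅ := by
          ext ω
          simp only [Set.mem_iInter, Set.mem_setOf_eq, Set.mem_empty_iff_false, iff_false,
            not_forall]
          exact ⟨X i ω - 1, by push_neg; linarith⟩
        rw [hempty, measure_empty] at h1
        exact h1
      have := (ENNReal.tendsto_toReal (by simp)).comp (hmeas.comp hbot)
      exact this
    have := tendsto_finset_sum Finset.univ (fun i (_ : i ∈ Finset.univ) => hone i)
    simpa using this
  have hδnn : ∀ x, 0 ≤ δ x := fun x =>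
    Finset.sum_nonneg fun i _ => ENNReal.toReal_nonneg
  -- ratio limits
  have hr1 : Tendsto (fun x => T (x + (↑n * L) * h x) / T x) atTop (𝓝 1) := hH.2.2.1 _
  have hr2 : Tendsto (fun x => T (x + (-(↑n * L)) * h x) / T x) atTop (𝓝 1) := hH.2.2.1 _
  -- eventual facts
  have hhx : ∀ᶠ x : ℝ in atTop, 0 < h x := hH.1
  have hxbig : ∀ᶠ x : ℝ in atTop, ((n : ℝ) + 1) * L * h x ≤ x := by
    have hc : (0:ℝ) < (((n:ℝ)+1)*L)⁻¹ := by positivity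
    have h1 := hH.2.1.def hc
    filter_upwards [h1, hhx, eventually_ge_atTop (0:ℝ)] with x hx1 hx2 hx3
    rw [Real.norm_eq_abs, Real.norm_eq_abs, abs_of_pos hx2, abs_of_nonneg hx3,
      inv_mul_eq_div, le_div_iff₀ (by positivity)] at hx1
    nlinarith
  have hTpos : ∀ᶠ x : ℝ in atTop, 0 < T x :=
    eventually_atTop.2 ⟨0, fun x hx => hL.1 x hx⟩
  have hδhalf : ∀ᶠ x : ℝ in atTop, δ x ≤ 1 / 2 :=
    (hδ0.eventually_lt_const (by norm_num : (0:ℝ) < 1/2)).mono fun x hx => hx.le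
  -- main eventual bounds
  have hmain : ∀ᶠ x : ℝ in atTop,
      (T (x + (↑n * L) * h x) * (1 - δ x) - N x) / (T x + N x) ≤ G x / S x ∧
      G x / S x ≤ T (x + (-(↑n * L)) * h x) / T x + N x / T x := by
    filter_upwards [hhx, hxbig, hδhalf, hTpos, eventually_ge_atTop (0:ℝ)]
      with x hhpos hbig hdhalf hTp hx0
    have hLh : 0 < L * h x := mul_pos hLpos hhpos
    have hncast : (0:ℝ) ≤ (n:ℝ) := Nat.cast_nonneg n
    have hLhx : L * h x ≤ x := by nlinarith
    have hnLh : (n:ℝ) * L * h x ≤ x := by nlinarith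
    have hSpos : 0 < S x := lt_of_lt_of_le hTp (hTS x)
    have hSnn : 0 ≤ S x := hSpos.le
    have hGnn : 0 ≤ G x := ENNReal.toReal_nonneg
    set A : Fin n → Set Ω := fun i => X i ⁻¹' Set.Ioi (L * h x) with hAdef
    have hpairval : ∀ i j : Fin n, j ≠ i →
        (μ (A i ∩ A j)).toReal = tailP μ (X i) (L * h x) * tailP μ (X j) (L * h x) := by
      intro i j hji
      rw [hprod i j hji.symm _ _ measurableSet_Ioi measurableSet_Ioi,
        htailP_eq, htailP_eq]
    -- upper bound : G x ≤ T (x - nL h x) + N x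
    have hupper : G x ≤ T (x + (-(↑n * L)) * h x) + N x := by
      have hincl : {ω | x < ∑ i, X i ω} ⊆
          {ω | x + (-(↑n * L)) * h x < maxRV X ω} ∪
            ⋃ i ∈ Finset.univ (α := Fin n), ⋃ j ∈ Finset.univ.erase i, (A i ∩ A j) := by
        intro ω hw
        simp only [Set.mem_setOf_eq] at hw
        by_cases hex : ∃ i, L * h x < X i ω
        · obtain ⟨i0, hi0⟩ := hex
          by_cases hex2 : ∃ j, j ≠ i0 ∧ L * h x < X j ω
          · obtain ⟨j, hj, hjx⟩ := hex2
            right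
            refine Set.mem_biUnion (Finset.mem_univ i0) ?_
            refine Set.mem_biUnion (Finset.mem_erase.2 ⟨hj, Finset.mem_univ j⟩) ?_
            exact ⟨hi0, hjx⟩
          · left
            push_neg at hex2
            have hsum : ∑ i, X i ω = X i0 ω + ∑ j ∈ Finset.univ.erase i0, X j ω :=
              (Finset.add_sum_erase _ _ (Finset.mem_univ i0)).symm
            have hrest : ∑ j ∈ Finset.univ.erase i0, X j ω ≤ (n - 1 : ℕ) * (L * h x) := by
              have := Finset.sum_le_card_nsmul (Finset.univ.erase i0) (fun j => X j ω)
                (L * h x) (fun j hj => by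
                  rcases lt_or_ge (L * h x) (X j ω) with hc | hc
                  · exact absurd hc (by
                      have := hex2 j (Finset.ne_of_mem_erase hj)
                      exact not_lt.2 this)
                  · exact hc)
              simpa [Finset.card_erase_of_mem, Finset.card_univ, nsmul_eq_mul] using this
            have hcast : ((n - 1 : ℕ) : ℝ) ≤ (n : ℝ) := by exact_mod_cast Nat.sub_le n 1
            have hXi0 : x + (-(↑n * L)) * h x < X i0 ω := by nlinarith
            have hle : X i0 ω ≤ maxRV X ω :=
              le_ciSup (Set.finite_range fun i => X i ω).bddAbove i0
            exact Set.mem_setOf_eq ▸ lt_of_lt_of_le hXi0 hle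
        · exfalso
          push_neg at hex
          have hsum : ∑ i, X i ω ≤ (n : ℕ) * (L * h x) := by
            have := Finset.sum_le_card_nsmul Finset.univ (fun j => X j ω) (L * h x)
              (fun j _ => hex j)
            simpa [Finset.card_univ, nsmul_eq_mul] using this
          nlinarith
      have h1 : G x ≤ (μ ({ω | x + (-(↑n * L)) * h x < maxRV X ω} ∪
          ⋃ i ∈ Finset.univ (α := Fin n), ⋃ j ∈ Finset.univ.erase i, (A i ∩ A j))).toReal :=
        toReal_meas_mono hincl
      have h2 := toReal_meas_union_le (μ := μ)
        {ω | x + (-(↑n * L)) * h x < maxRV X ω}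
        (⋃ i ∈ Finset.univ (α := Fin n), ⋃ j ∈ Finset.univ.erase i, (A i ∩ A j))
      have h3 : (μ (⋃ i ∈ Finset.univ (α := Fin n),
          ⋃ j ∈ Finset.univ.erase i, (A i ∩ A j))).toReal ≤ N x := by
        refine le_trans (toReal_meas_biUnion_le Finset.univ _) ?_
        rw [hNdef]
        refine Finset.sum_le_sum fun i _ => ?_
        refine le_trans (toReal_meas_biUnion_le _ _) ?_
        refine le_of_eq (Finset.sum_congr rfl fun j hj => ?_)
        exact hpairval i j (Finset.ne_of_mem_erase hj)
      have hTm : (μ {ω | x + (-(↑n * L)) * h x < maxRV X ω}).toReal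
          = T (x + (-(↑n * L)) * h x) := rfl
      calc G x ≤ _ := h1
        _ ≤ _ := h2
        _ ≤ T (x + (-(↑n * L)) * h x) + N x := by rw [hTm]; linarith
    -- S ≤ T + N
    have hSTN : S x ≤ T x + N x := by
      have hb := bonferroni (μ := μ) (fun i => X i ⁻¹' Set.Ioi x)
        (fun i => hA i x) Finset.univ
      have hU2 : (⋃ i ∈ Finset.univ (α := Fin n), X i ⁻¹' Set.Ioi x)
          = ⋃ i, X i ⁻¹' Set.Ioi x := by simp
      have hTeq : T x = (μ (⋃ i, X i ⁻¹' Set.Ioi x)).toReal := by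
        rw [hTdef]; unfold tailP; rw [hmaxset]
      have hpairs : ∑ i : Fin n, ∑ j ∈ Finset.univ.erase i,
          (μ (X i ⁻¹' Set.Ioi x ∩ X j ⁻¹' Set.Ioi x)).toReal ≤ N x := by
        rw [hNdef]
        refine Finset.sum_le_sum fun i _ => Finset.sum_le_sum fun j hj => ?_
        rw [hprod i j (Finset.ne_of_mem_erase hj).symm _ _ measurableSet_Ioi measurableSet_Ioi]
        refine mul_le_mul (htail_anti i _ _ hLhx) (htail_anti j _ _ hLhx)
          (htail_nonneg j x) (htail_nonneg i _)
      have hSx : S x = ∑ i : Fin n, (μ (X i ⁻¹' Set.Ioi x)).toReal := rfl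
      rw [hU2] at hb
      rw [hSx, hTeq]
      linarith [hb, hpairs]
    -- lower bound
    have hlower : T (x + (↑n * L) * h x) * (1 - δ x) - N x ≤ G x := by
      set x' : ℝ := x + (↑n * L) * h x with hx'def
      set E : Fin n → Set Ω := fun j =>
        (X j ⁻¹' Set.Ioi x') ∩ ⋂ i ∈ Finset.univ.erase j, X i ⁻¹' Set.Ioi (-(L * h x))
        with hEdef
      have hEm : ∀ j, MeasurableSet (E j) := fun j =>
        (hA j x').inter (MeasurableSet.biInter (Finset.univ.erase j).countable_toSet
          fun i _ => hA i _)
      -- union of E j is inside the sum event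
      have hEincl : (⋃ j ∈ Finset.univ (α := Fin n), E j) ⊆ {ω | x < ∑ i, X i ω} := by
        intro ω hw
        obtain ⟨j, -, hj2⟩ := Set.mem_iUnion₂.1 hw
        obtain ⟨hj3, hj4⟩ := hj2
        simp only [Set.mem_preimage, Set.mem_Ioi] at hj3
        have hrest : ((n - 1 : ℕ) : ℝ) * (-(L * h x)) ≤ ∑ i ∈ Finset.univ.erase j, X i ω := by
          have := Finset.card_nsmul_le_sum (Finset.univ.erase j) (fun i => X i ω)
            (-(L * h x)) (fun i hi => by
              have := Set.mem_iInter₂.1 hj4 i hi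
              simp only [Set.mem_preimage, Set.mem_Ioi] at this
              exact this.le)
          simpa [Finset.card_erase_of_mem, Finset.card_univ, nsmul_eq_mul] using this
        have hsum : ∑ i, X i ω = X j ω + ∑ i ∈ Finset.univ.erase j, X i ω :=
          (Finset.add_sum_erase _ _ (Finset.mem_univ j)).symm
        have hcast : ((n - 1 : ℕ) : ℝ) ≤ (n : ℝ) := by exact_mod_cast Nat.sub_le n 1
        simp only [Set.mem_setOf_eq]
        rw [hsum, hx'def] at *
        nlinarith [hj3]
      -- each E j has large probability
      have hEj : ∀ j : Fin n, tailP μ (X j) x' * (1 - δ x) ≤ (μ (E j)).toReal := by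
        intro j
        have hincl2 : X j ⁻¹' Set.Ioi x' ⊆ E j ∪
            ⋃ i ∈ Finset.univ.erase j, (X j ⁻¹' Set.Ioi x' ∩ X i ⁻¹' Set.Iic (-(L * h x))) := by
          intro ω hw
          by_cases hE : ω ∈ E j
          · exact Or.inl hE
          · right
            rw [hEdef] at hE
            simp only [Set.mem_inter_iff, Set.mem_iInter, not_and, not_forall] at hE
            obtain ⟨i, hi, hix⟩ := hE hw
            refine Set.mem_biUnion hi ⟨hw, ?_⟩
            simp only [Set.mem_preimage, Set.mem_Ioi] at hix
            simpa only [Set.mem_preimage, Set.mem_Iic] using not_lt.1 hix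
        have h1 : tailP μ (X j) x' ≤ (μ (E j)).toReal +
            ∑ i ∈ Finset.univ.erase j,
              (μ (X j ⁻¹' Set.Ioi x' ∩ X i ⁻¹' Set.Iic (-(L * h x)))).toReal := by
          rw [htailP_eq]
          refine le_trans (toReal_meas_mono hincl2) ?_
          refine le_trans (toReal_meas_union_le _ _) ?_
          exact add_le_add le_rfl (toReal_meas_biUnion_le _ _)
        have h2 : ∑ i ∈ Finset.univ.erase j,
            (μ (X j ⁻¹' Set.Ioi x' ∩ X i ⁻¹' Set.Iic (-(L * h x)))).toReal
            ≤ tailP μ (X j) x' * δ x := by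
          have heach : ∀ i ∈ Finset.univ.erase j,
              (μ (X j ⁻¹' Set.Ioi x' ∩ X i ⁻¹' Set.Iic (-(L * h x)))).toReal
              = tailP μ (X j) x' * (μ {ω | X i ω ≤ -(L * h x)}).toReal := by
            intro i hi
            rw [hprod j i (Finset.ne_of_mem_erase hi).symm _ _ measurableSet_Ioi
              measurableSet_Iic, htailP_eq]
            rfl
          rw [Finset.sum_congr rfl heach, ← Finset.mul_sum]
          refine mul_le_mul_of_nonneg_left ?_ (htail_nonneg j x')
          rw [hδdef]
          exact Finset.sum_le_sum_of_subset_of_nonneg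
            (Finset.subset_univ _) (fun _ _ _ => ENNReal.toReal_nonneg)
        nlinarith [h1, h2]
      -- pairwise intersections are small
      have hEpair : ∑ j : Fin n, ∑ k ∈ Finset.univ.erase j,
          (μ (E j ∩ E k)).toReal ≤ N x := by
        rw [hNdef]
        refine Finset.sum_le_sum fun j _ => Finset.sum_le_sum fun k hk => ?_
        have hsubp : E j ∩ E k ⊆ A j ∩ A k := by
          have hx'L : L * h x ≤ x' := by rw [hx'def]; nlinarith
          intro ω hw
          obtain ⟨⟨hw1, -⟩, ⟨hw2, -⟩⟩ := hw
          simp only [Set.mem_preimage, Set.mem_Ioi] at hw1 hw2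
          exact ⟨Set.mem_preimage.2 (Set.mem_Ioi.2 (lt_of_le_of_lt hx'L hw1)),
            Set.mem_preimage.2 (Set.mem_Ioi.2 (lt_of_le_of_lt hx'L hw2))⟩
        refine le_trans (toReal_meas_mono hsubp) (le_of_eq ?_)
        exact hpairval j k (Finset.ne_of_mem_erase hk)
      -- Bonferroni for E
      have hbE := bonferroni (μ := μ) E hEm Finset.univ
      have hGE : (μ (⋃ j ∈ Finset.univ (α := Fin n), E j)).toReal ≤ G x :=
        toReal_meas_mono hEincl
      have hsumE : ∑ j : Fin n, tailP μ (X j) x' * (1 - δ x) ≤ ∑ j : Fin n, (μ (E j)).toReal :=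
        Finset.sum_le_sum fun j _ => hEj j
      have hSx' : ∑ j : Fin n, tailP μ (X j) x' * (1 - δ x) = S x' * (1 - δ x) := by
        rw [hSdef, Finset.sum_mul]
      have hTSx' : T x' * (1 - δ x) ≤ S x' * (1 - δ x) :=
        mul_le_mul_of_nonneg_right (hTS x') (by linarith)
      have : T x' * (1 - δ x) - N x ≤ (μ (⋃ j ∈ Finset.univ (α := Fin n), E j)).toReal := by
        have := hbE
        rw [← hSx'] at hTSx'
        linarith [hsumE, hEpair]
      linarith [hGE, this]
    -- put the two ratio bounds together
    have hTN : 0 < T x + N x := by nlinarith [hNnn x]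
    constructor
    · rw [div_le_div_iff₀ hTN hSpos]
      nlinarith [mul_le_mul_of_nonneg_right hlower hSnn,
        mul_le_mul_of_nonneg_left hSTN hGnn]
    · rw [← add_div, div_le_div_iff₀ hSpos hTp]
      nlinarith [mul_le_mul_of_nonneg_right hupper hTp.le,
        mul_le_mul_of_nonneg_left (hTS x)
          (add_nonneg ENNReal.toReal_nonneg (hNnn x) : (0:ℝ) ≤ T (x + (-(↑n * L)) * h x) + N x)]
  -- squeeze
  have hlo : Tendsto (fun x => (T (x + (↑n * L) * h x) * (1 - δ x) - N x) / (T x + N x))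
      atTop (𝓝 1) := by
    have hten : Tendsto (fun x => ((T (x + (↑n * L) * h x) / T x) * (1 - δ x) - N x / T x) /
        (1 + N x / T x)) atTop (𝓝 1) := by
      have h1 := ((hr1.mul ((tendsto_const_nhds :
          Tendsto (fun _:ℝ => (1:ℝ)) atTop (𝓝 1)).sub hδ0)).sub hNT).div
        ((tendsto_const_nhds : Tendsto (fun _:ℝ => (1:ℝ)) atTop (𝓝 1)).add hNT)
        (by norm_num : (1:ℝ) + 0 ≠ 0)
      simpa [Pi.div_def] using h1
    refine hten.congr' ?_
    filter_upwards [hTpos] with x hx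
    have hB : T x ≠ 0 := hx.ne'
    have hBC : T x + N x ≠ 0 := by nlinarith [hNnn x]
    field_simp
  have hhi : Tendsto (fun x => T (x + (-(↑n * L)) * h x) / T x + N x / T x) atTop (𝓝 1) := by
    have := hr2.add hNT
    simpa using this
  refine tendsto_of_tendsto_of_tendsto_of_le_of_le' hlo hhi ?_ ?_
  · exact hmain.mono fun x hx => hx.1
  · exact hmain.mono fun x hx => hx.2
end

section
/- Let X_1,...,X_n be n real-valued random variables with maximum X_{n:n} = max(X_1,...,X_n), and assume condition (v1): lim_{x→∞} P(X_i > x, X_j > x)/P(X_{n:n} > x) = 0 for all 1 ≤ i < j ≤ n. If X_i is long-tailed (X_i ∈ 𝓛) for every 1 ≤ i ≤ n, then X_{n:n} ∈ 𝓛. -/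
open MeasureTheory Filter Topology Asymptotics

/-- Lemma 4.1(b), long-tailed case: under (v1), if every `X_i ∈ 𝓛` then
`X_{n:n} ∈ 𝓛`. -/
theorem max_long_tailed_of_v1
    {Ω : Type*} [MeasurableSpace Ω] (μ : Measure Ω) [IsProbabilityMeasure μ]
    {n : ℕ} [NeZero n] (X : Fin n → Ω → ℝ) (hXm : ∀ i, Measurable (X i))
    (hv1 : CondV1 μ X)
    (hL : ∀ i, LongTailedT (tailP μ (X i))) :
    LongTailedT (tailP μ (maxRV X)) := by
  classical
  have hne : Nonempty (Fin n) := Fin.pos_iff_nonempty.mp (Nat.pos_of_ne_zero (NeZero.ne n))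
  set T := tailP μ (maxRV X) with hTdef
  have hsub : ∀ (i : Fin n) (x : ℝ), {ω | x < X i ω} ⊆ {ω | x < maxRV X ω} := by
    intro i x ω hω
    simp only [Set.mem_setOf_eq] at hω ⊢
    exact lt_of_lt_of_le hω (le_ciSup (Set.Finite.bddAbove (Set.finite_range fun j => X j ω)) i)
  have hTmono : ∀ (i : Fin n) (x : ℝ), tailP μ (X i) x ≤ T x := fun i x =>
    ENNReal.toReal_mono (measure_ne_top μ _) (measure_mono (hsub i x))
  have hTpos : ∀ x : ℝ, 0 ≤ x → 0 < T x := fun x hx =>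
    lt_of_lt_of_le ((hL (Classical.arbitrary (Fin n))).1 x hx) (hTmono _ x)
  refine ⟨hTpos, ?_⟩
  have hTshift : ∀ (y : ℝ), 0 ≤ y → ∀ x : ℝ, T (x + y) ≤ T x := by
    intro y hy x
    refine ENNReal.toReal_mono (measure_ne_top μ _) (measure_mono fun ω hω => ?_)
    simp only [Set.mem_setOf_eq] at hω ⊢
    linarith
  have hTishift : ∀ (i : Fin n) (y : ℝ), 0 ≤ y → ∀ x : ℝ,
      tailP μ (X i) (x + y) ≤ tailP μ (X i) x := by
    intro i y hy x
    refine ENNReal.toReal_mono (measure_ne_top μ _) (measure_mono fun ω hω => ?_)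
    simp only [Set.mem_setOf_eq] at hω ⊢
    linarith
  have main : ∀ y : ℝ, 0 ≤ y → Tendsto (fun x => T (x + y) / T x) atTop (𝓝 1) := by
    intro y hy
    -- P i x := P(x < X i ≤ x + y)
    set P : Fin n → ℝ → ℝ := fun i x => (μ {ω | x < X i ω ∧ X i ω ≤ x + y}).toReal with hPdef
    have hPle : ∀ (i : Fin n) (x : ℝ),
        P i x ≤ tailP μ (X i) x - tailP μ (X i) (x + y) := by
      intro i x
      have hdisj : Disjoint {ω | x < X i ω ∧ X i ω ≤ x + y} {ω | x + y < X i ω} := by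
        rw [Set.disjoint_left]
        rintro ω ⟨_, h2⟩ h3
        exact absurd h3 (not_lt.mpr h2)
      have hmeas : MeasurableSet {ω | x + y < X i ω} := (hXm i) measurableSet_Ioi
      have hunion : μ ({ω | x < X i ω ∧ X i ω ≤ x + y} ∪ {ω | x + y < X i ω})
          = μ {ω | x < X i ω ∧ X i ω ≤ x + y} + μ {ω | x + y < X i ω} :=
        measure_union hdisj hmeas
      have hsubU : ({ω | x < X i ω ∧ X i ω ≤ x + y} ∪ {ω | x + y < X i ω})
          ⊆ {ω | x < X i ω} := by
        rintro ω (⟨h1, _⟩ | h1)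
        · exact h1
        · simp only [Set.mem_setOf_eq] at h1 ⊢
          linarith
      have hle : μ {ω | x < X i ω ∧ X i ω ≤ x + y} + μ {ω | x + y < X i ω}
          ≤ μ {ω | x < X i ω} := hunion ▸ measure_mono hsubU
      have := ENNReal.toReal_mono (measure_ne_top μ _) hle
      rw [ENNReal.toReal_add (measure_ne_top μ _) (measure_ne_top μ _)] at this
      simpa [tailP] using by linarith [this]
    have hPnonneg : ∀ (i : Fin n) (x : ℝ), 0 ≤ P i x := fun i x => ENNReal.toReal_nonneg
    -- key inequality: T x ≤ T (x + y) + ∑ i, P i x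
    have key : ∀ x : ℝ, T x ≤ T (x + y) + ∑ i, P i x := by
      intro x
      have hsubset : {ω | x < maxRV X ω} ⊆
          {ω | x + y < maxRV X ω} ∪ ⋃ i, {ω | x < X i ω ∧ X i ω ≤ x + y} := by
        intro ω hω
        have hbdd : BddAbove (Set.range fun i => X i ω) :=
          Set.Finite.bddAbove (Set.finite_range _)
        obtain ⟨i, hi⟩ := (lt_ciSup_iff hbdd).mp hω
        by_cases h : x + y < maxRV X ω
        · exact Or.inl h
        · refine Or.inr (Set.mem_iUnion.mpr ⟨i, hi, ?_⟩)
          have : X i ω ≤ maxRV X ω := le_ciSup hbdd i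
          linarith [not_lt.mp h]
      have hmle : μ {ω | x < maxRV X ω} ≤
          μ {ω | x + y < maxRV X ω} + ∑ i, μ {ω | x < X i ω ∧ X i ω ≤ x + y} :=
        le_trans (measure_mono hsubset)
          (le_trans (measure_union_le _ _) (by gcongr; exact measure_iUnion_fintype_le _ _))
      have hfin : μ {ω | x + y < maxRV X ω} + ∑ i, μ {ω | x < X i ω ∧ X i ω ≤ x + y} ≠ ⊤ := by
        refine ENNReal.add_ne_top.mpr ⟨measure_ne_top μ _, ?_⟩
        exact (ENNReal.sum_lt_top.mpr fun i _ => measure_lt_top μ _).ne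
      have := ENNReal.toReal_mono hfin hmle
      rw [ENNReal.toReal_add (measure_ne_top μ _)
        (ENNReal.sum_lt_top.mpr fun i _ => measure_lt_top μ _).ne,
        ENNReal.toReal_sum (fun i _ => measure_ne_top μ _)] at this
      simpa [hTdef, tailP, hPdef] using this
    -- lower bound function
    set g : ℝ → ℝ := fun x => 1 - ∑ i, (1 - tailP μ (X i) (x + y) / tailP μ (X i) x)
      with hgdef
    have hg : Tendsto g atTop (𝓝 1) := by
      have hsum : Tendsto (fun x => ∑ i : Fin n,
          (1 - tailP μ (X i) (x + y) / tailP μ (X i) x)) atTop (𝓝 0) := by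
        have : Tendsto (fun x => ∑ i : Fin n,
            (1 - tailP μ (X i) (x + y) / tailP μ (X i) x)) atTop
            (𝓝 (∑ i : Fin n, 0)) := by
          refine tendsto_finset_sum _ fun i _ => ?_
          simpa using ((tendsto_const_nhds (x := (1:ℝ))).sub ((hL i).2 y))
        simpa using this
      have := (tendsto_const_nhds (x := (1:ℝ))).sub hsum
      simpa [hgdef] using this
    refine tendsto_of_tendsto_of_tendsto_of_le_of_le' hg tendsto_const_nhds ?_ ?_
    · -- g x ≤ T (x+y) / T x eventually
      filter_upwards [eventually_ge_atTop (0 : ℝ)] with x hx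
      have hTx : 0 < T x := hTpos x hx
      have hbound : 1 - T (x + y) / T x ≤ ∑ i, (1 - tailP μ (X i) (x + y) / tailP μ (X i) x) := by
        have h1 : (T x - T (x + y)) / T x ≤ (∑ i, P i x) / T x := by
          have := key x
          gcongr
          linarith
        have h2 : (∑ i, P i x) / T x = ∑ i, P i x / T x := Finset.sum_div _ _ _
        have h3 : ∑ i, P i x / T x ≤
            ∑ i, (1 - tailP μ (X i) (x + y) / tailP μ (X i) x) := by
          refine Finset.sum_le_sum fun i _ => ?_
          have hTix : 0 < tailP μ (X i) x := (hL i).1 x hx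
          have hPi := hPle i x
          have h4 : P i x / T x ≤
              (tailP μ (X i) x - tailP μ (X i) (x + y)) / tailP μ (X i) x := by
            refine div_le_div₀ (by linarith [hTishift i y hy x]) hPi hTix (hTmono i x)
          calc P i x / T x ≤ (tailP μ (X i) x - tailP μ (X i) (x + y)) / tailP μ (X i) x := h4
            _ = 1 - tailP μ (X i) (x + y) / tailP μ (X i) x := by
                rw [sub_div, div_self hTix.ne']
        have h5 : (T x - T (x + y)) / T x = 1 - T (x + y) / T x := by
          rw [sub_div, div_self hTx.ne']
        linarith [h1, h2 ▸ h1, h3]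
      simp only [hgdef]
      linarith
    · -- T (x+y) / T x ≤ 1 eventually
      filter_upwards [eventually_ge_atTop (0 : ℝ)] with x hx
      exact div_le_one_of_le₀ (hTshift y hy x) (hTpos x hx).le
  intro y
  rcases le_or_gt 0 y with hy | hy
  · exact main y hy
  · have h1 : Tendsto (fun x => T ((x + y) + -y) / T (x + y)) atTop (𝓝 1) :=
      (main (-y) (by linarith)).comp (tendsto_atTop_add_const_right atTop y tendsto_id)
    have h2 : Tendsto (fun x => (T ((x + y) + -y) / T (x + y))⁻¹) atTop (𝓝 1) := by
      simpa using h1.inv₀ one_ne_zero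
    refine h2.congr fun x => ?_
    rw [inv_div]
    norm_num
end

section
/- Let X_1,...,X_n be n real-valued random variables with maximum X_{n:n} = max(X_1,...,X_n), and assume condition (v1): lim_{x→∞} P(X_i > x, X_j > x)/P(X_{n:n} > x) = 0 for all 1 ≤ i < j ≤ n. If X_i is dominatedly varying (X_i ∈ 𝓓) for every 1 ≤ i ≤ n, then X_{n:n} ∈ 𝓓. -/
open MeasureTheory Filter Topology Asymptotics

/-- From positive liminf (in `EReal`) extract a positive real eventual lower bound. -/
lemma exists_pos_eventual_le_of_liminf_pos {f : ℝ → ℝ}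
    (h : (0 : EReal) < Filter.atTop.liminf (fun x => ((f x : ℝ) : EReal))) :
    ∃ c : ℝ, 0 < c ∧ ∀ᶠ x in Filter.atTop, c ≤ f x := by
  obtain ⟨b, hb0, hbl⟩ := exists_between h
  have hbt : b ≠ ⊤ := (lt_of_lt_of_le hbl le_top).ne
  have hbb : b ≠ ⊥ := by
    intro hbot; rw [hbot] at hb0; exact (not_lt_bot hb0)
  lift b to ℝ using ⟨hbt, hbb⟩
  refine ⟨b, by exact_mod_cast hb0, ?_⟩
  filter_upwards [Filter.eventually_lt_of_lt_liminf hbl] with x hx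
  exact le_of_lt (by exact_mod_cast hx)

/-- From finite limsup (in `EReal`) extract a real eventual upper bound. -/
lemma exists_eventual_le_of_limsup_lt_top {f : ℝ → ℝ}
    (h : Filter.atTop.limsup (fun x => ((f x : ℝ) : EReal)) < ⊤) :
    ∃ C : ℝ, ∀ᶠ x in Filter.atTop, f x ≤ C := by
  obtain ⟨b, hb1, hb2⟩ := exists_between h
  rcases eq_or_ne b ⊥ with hb | hb
  · rw [hb] at hb1
    exact absurd ((Filter.liminf_le_limsup).trans_lt hb1) (by
      simp [not_lt_bot])
  · lift b to ℝ using ⟨hb2.ne, hb⟩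
    refine ⟨b, ?_⟩
    filter_upwards [Filter.eventually_lt_of_limsup_lt hb1] with x hx
    exact le_of_lt (by exact_mod_cast hx)

/-- Lemma 4.1(b), dominated variation case: under (v1), if every
`X_i ∈ 𝓓` then `X_{n:n} ∈ 𝓓`. -/
theorem max_dom_var_of_v1
    {Ω : Type*} [MeasurableSpace Ω] (μ : Measure Ω) [IsProbabilityMeasure μ]
    {n : ℕ} [NeZero n] (X : Fin n → Ω → ℝ) (hXm : ∀ i, Measurable (X i))
    (hv1 : CondV1 μ X)
    (hD : ∀ i, DomVarFun (tailP μ (X i))) :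
    DomVarFun (tailP μ (maxRV X)) := by
  classical
  have hfin : ∀ (Y : Ω → ℝ) (x : ℝ), μ {ω | x < Y ω} ≠ ⊤ := fun Y x => measure_ne_top μ _
  have htnn : ∀ (Y : Ω → ℝ) (x : ℝ), 0 ≤ tailP μ Y x := fun Y x => ENNReal.toReal_nonneg
  have hle : ∀ (i : Fin n) (x : ℝ), tailP μ (X i) x ≤ tailP μ (maxRV X) x := by
    intro i x
    refine ENNReal.toReal_mono (hfin _ _) (measure_mono fun ω hω => ?_)
    have h2 : X i ω ≤ maxRV X ω :=
      le_ciSup (Set.Finite.bddAbove (Set.finite_range fun j => X j ω)) i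
    exact lt_of_lt_of_le hω h2
  have hsum : ∀ x : ℝ, tailP μ (maxRV X) x ≤ ∑ i, tailP μ (X i) x := by
    intro x
    have h1 : {ω | x < maxRV X ω} ⊆ ⋃ i, {ω | x < X i ω} := by
      intro ω hω
      simp only [Set.mem_setOf_eq, maxRV] at hω
      obtain ⟨i, hi⟩ :=
        (lt_ciSup_iff (Set.Finite.bddAbove (Set.finite_range _))).mp hω
      exact Set.mem_iUnion.mpr ⟨i, hi⟩
    calc tailP μ (maxRV X) x ≤ (∑ i, μ {ω | x < X i ω}).toReal := by
          refine ENNReal.toReal_mono ?_ ((measure_mono h1).trans (measure_iUnion_fintype_le _ _))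
          exact (ENNReal.sum_lt_top.mpr fun i _ => measure_lt_top μ _).ne
      _ = ∑ i, tailP μ (X i) x := ENNReal.toReal_sum fun i _ => hfin _ _
  intro y hy
  -- extract constants for each i
  have hextract : ∀ i : Fin n, ∃ c C : ℝ, 0 < c ∧
      ∀ᶠ x in atTop, 0 < tailP μ (X i) x ∧
        c * tailP μ (X i) x ≤ tailP μ (X i) (x * y) ∧
        tailP μ (X i) (x * y) ≤ C * tailP μ (X i) x := by
    intro i
    obtain ⟨c1, hc1, hev1⟩ := exists_pos_eventual_le_of_liminf_pos ((hD i 1 one_pos).1)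
    obtain ⟨c, hc, hev⟩ := exists_pos_eventual_le_of_liminf_pos ((hD i y hy).1)
    obtain ⟨C, hevC⟩ := exists_eventual_le_of_limsup_lt_top ((hD i y hy).2)
    refine ⟨c, C, hc, ?_⟩
    filter_upwards [hev1, hev, hevC] with x h1 h2 h3
    have hpos : 0 < tailP μ (X i) x := by
      rcases eq_or_lt_of_le (htnn (X i) x) with h | h
      · exfalso
        rw [mul_one, ← h, div_zero] at h1
        exact absurd (hc1.trans_le h1) (lt_irrefl 0)
      · exact h
    exact ⟨hpos, (le_div_iff₀ hpos).mp h2, (div_le_iff₀ hpos).mp h3⟩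
  choose c C hc hev using hextract
  have hne : (Finset.univ : Finset (Fin n)).Nonempty := Finset.univ_nonempty
  set cm : ℝ := Finset.univ.inf' hne c with hcm
  have hcm_pos : 0 < cm := (Finset.lt_inf'_iff hne).mpr fun i _ => hc i
  have hnpos : (0 : ℝ) < n := by exact_mod_cast Nat.pos_of_ne_zero (NeZero.ne n)
  have hmain : ∀ᶠ x in atTop,
      cm / n ≤ tailP μ (maxRV X) (x * y) / tailP μ (maxRV X) x ∧
      tailP μ (maxRV X) (x * y) / tailP μ (maxRV X) x ≤ ∑ i, C i := by
    filter_upwards [Filter.eventually_all.mpr hev] with x hx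
    have hMx_pos : 0 < tailP μ (maxRV X) x :=
      lt_of_lt_of_le (hx 0).1 (hle 0 x)
    constructor
    · rw [div_le_div_iff₀ hnpos hMx_pos]
      have h1 : ∀ j : Fin n, cm * tailP μ (X j) x ≤ tailP μ (maxRV X) (x * y) := by
        intro j
        have : cm * tailP μ (X j) x ≤ c j * tailP μ (X j) x :=
          mul_le_mul_of_nonneg_right (Finset.inf'_le c (Finset.mem_univ j)) (htnn _ _)
        exact this.trans ((hx j).2.1.trans (hle j (x * y)))
      calc cm * tailP μ (maxRV X) x ≤ cm * ∑ j, tailP μ (X j) x :=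
            mul_le_mul_of_nonneg_left (hsum x) hcm_pos.le
        _ = ∑ j : Fin n, cm * tailP μ (X j) x := Finset.mul_sum _ _ _
        _ ≤ ∑ _j : Fin n, tailP μ (maxRV X) (x * y) :=
            Finset.sum_le_sum fun j _ => h1 j
        _ = n * tailP μ (maxRV X) (x * y) := by
            rw [Finset.sum_const, Finset.card_univ, Fintype.card_fin, nsmul_eq_mul]
        _ = tailP μ (maxRV X) (x * y) * n := mul_comm _ _
    · rw [div_le_iff₀ hMx_pos]
      have hCj : ∀ j : Fin n, 0 ≤ C j := by
        intro j
        have h1 := (hx j).2.1.trans (hx j).2.2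
        nlinarith [(hx j).1, hc j]
      calc tailP μ (maxRV X) (x * y) ≤ ∑ j, tailP μ (X j) (x * y) := hsum _
        _ ≤ ∑ j, C j * tailP μ (maxRV X) x := by
            refine Finset.sum_le_sum fun j _ => (hx j).2.2.trans ?_
            exact mul_le_mul_of_nonneg_left (hle j x) (hCj j)
        _ = (∑ j, C j) * tailP μ (maxRV X) x := (Finset.sum_mul _ _ _).symm
  constructor
  · have h1 : ((cm / n : ℝ) : EReal) ≤
        atTop.liminf (fun x => ((tailP μ (maxRV X) (x * y) / tailP μ (maxRV X) x : ℝ) : EReal)) := by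
      refine Filter.le_liminf_of_le (by isBoundedDefault) ?_
      filter_upwards [hmain] with x hx
      exact_mod_cast hx.1
    refine lt_of_lt_of_le ?_ h1
    exact_mod_cast div_pos hcm_pos hnpos
  · have h2 : atTop.limsup (fun x => ((tailP μ (maxRV X) (x * y) / tailP μ (maxRV X) x : ℝ) : EReal))
        ≤ ((∑ i, C i : ℝ) : EReal) := by
      refine Filter.limsup_le_of_le (by isBoundedDefault) ?_
      filter_upwards [hmain] with x hx
      exact_mod_cast hx.2
    exact lt_of_le_of_lt h2 (EReal.coe_lt_top _)
end

section
/- Let X_1,...,X_n be n real-valued random variables with maximum X_{n:n} = max(X_1,...,X_n), and assume condition (v1): lim_{x→∞} P(X_i > x, X_j > x)/P(X_{n:n} > x) = 0 for all 1 ≤ i < j ≤ n. If for some α > 0 the distribution function of each X_i is regularly varying with index −α (X_i ∈ 𝓡_{−α}) for every 1 ≤ i ≤ n, then X_{n:n} ∈ 𝓡_{−α}. -/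
open MeasureTheory Filter Topology Asymptotics

/-- A tail function is regularly varying with index `-α`. -/
def RegVarTail (T : ℝ → ℝ) (α : ℝ) : Prop :=
  ∀ y : ℝ, 0 < y → Tendsto (fun x => T (x * y) / T x) atTop (𝓝 (y ^ (-α)))

lemma bonferroni_aux {Ω : Type*} [MeasurableSpace Ω] (μ : Measure Ω) {n : ℕ}
    (A : Fin n → Set Ω) (hA : ∀ i, MeasurableSet (A i)) (s : Finset (Fin n)) :
    ∑ i ∈ s, μ (A i) ≤ μ (⋃ i ∈ s, A i) +
      ∑ i ∈ s, ∑ j ∈ s, (if i < j then μ (A i ∩ A j) else 0) := by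
  classical
  induction s using Finset.induction_on with
  | empty => simp
  | @insert a s ha ih =>
    have hU : MeasurableSet (⋃ i ∈ s, A i) := s.measurableSet_biUnion fun i _ => hA i
    have h1 : μ (A a) + μ (⋃ i ∈ s, A i) = μ (A a ∪ ⋃ i ∈ s, A i) + μ (A a ∩ ⋃ i ∈ s, A i) :=
      (measure_union_add_inter _ hU).symm
    have h2 : μ (A a ∩ ⋃ i ∈ s, A i) ≤ ∑ j ∈ s, μ (A a ∩ A j) := by
      rw [Set.inter_iUnion₂]
      exact measure_biUnion_finset_le s _
    have h3 : (⋃ i ∈ insert a s, A i) = A a ∪ ⋃ i ∈ s, A i := by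
      simp [Set.biUnion_insert]
    have h4 : ∑ i ∈ insert a s, ∑ j ∈ insert a s, (if i < j then μ (A i ∩ A j) else 0)
        = (∑ j ∈ s, μ (A a ∩ A j)) +
          ∑ i ∈ s, ∑ j ∈ s, (if i < j then μ (A i ∩ A j) else 0) := by
      rw [Finset.sum_insert ha, Finset.sum_insert ha]
      have hrow : ∀ i ∈ s, ∑ j ∈ insert a s, (if i < j then μ (A i ∩ A j) else 0)
          = (if i < a then μ (A i ∩ A a) else 0) +
            ∑ j ∈ s, (if i < j then μ (A i ∩ A j) else 0) := fun i _ => Finset.sum_insert ha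
      rw [Finset.sum_congr rfl hrow, Finset.sum_add_distrib]
      simp only [lt_irrefl, if_false]
      rw [zero_add, ← add_assoc, ← Finset.sum_add_distrib]
      congr 1
      refine Finset.sum_congr rfl fun j hj => ?_
      have hja : j ≠ a := fun h => ha (h ▸ hj)
      rcases lt_trichotomy a j with h | h | h
      · simp [h, not_lt.2 h.le]
      · exact absurd h.symm hja
      · simp [h, not_lt.2 h.le, Set.inter_comm]
    rw [Finset.sum_insert ha, h3, h4]
    calc μ (A a) + ∑ i ∈ s, μ (A i)
        ≤ μ (A a) + (μ (⋃ i ∈ s, A i) +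
            ∑ i ∈ s, ∑ j ∈ s, (if i < j then μ (A i ∩ A j) else 0)) := add_le_add_right ih _
      _ = (μ (A a) + μ (⋃ i ∈ s, A i)) +
            ∑ i ∈ s, ∑ j ∈ s, (if i < j then μ (A i ∩ A j) else 0) := by ring
      _ = (μ (A a ∪ ⋃ i ∈ s, A i) + μ (A a ∩ ⋃ i ∈ s, A i)) +
            ∑ i ∈ s, ∑ j ∈ s, (if i < j then μ (A i ∩ A j) else 0) := by rw [h1]
      _ ≤ μ (A a ∪ ⋃ i ∈ s, A i) + ((∑ j ∈ s, μ (A a ∩ A j)) +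
            ∑ i ∈ s, ∑ j ∈ s, (if i < j then μ (A i ∩ A j) else 0)) := by
          rw [add_assoc]
          exact add_le_add_right (add_le_add_left h2 _) _

lemma bonferroni_s11 {Ω : Type*} [MeasurableSpace Ω] (μ : Measure Ω) {n : ℕ}
    (A : Fin n → Set Ω) (hA : ∀ i, MeasurableSet (A i)) :
    ∑ i, μ (A i) ≤ μ (⋃ i, A i) + ∑ i, ∑ j, (if i < j then μ (A i ∩ A j) else 0) := by
  simpa using bonferroni_aux μ A hA Finset.univ

/-- Lemma 4.1(b), regular variation case: under (v1), if every
`X_i ∈ 𝓡_{-α}` for some `α > 0`, then `X_{n:n} ∈ 𝓡_{-α}`. -/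
theorem max_reg_var_of_v1
    {Ω : Type*} [MeasurableSpace Ω] (μ : Measure Ω) [IsProbabilityMeasure μ]
    {n : ℕ} [NeZero n] (X : Fin n → Ω → ℝ) (hXm : ∀ i, Measurable (X i))
    (hv1 : CondV1 μ X)
    (α : ℝ) (hα : 0 < α)
    (hR : ∀ i, RegVarTail (tailP μ (X i)) α) :
    RegVarTail (tailP μ (maxRV X)) α := by
  classical
  have hfin : ∀ s : Set Ω, μ s ≠ ⊤ := fun s => measure_ne_top μ s
  have hAmeas : ∀ (i : Fin n) (x : ℝ), MeasurableSet {ω | x < X i ω} := fun i x =>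
    (hXm i) measurableSet_Ioi
  have hmaxset : ∀ x : ℝ, {ω | x < maxRV X ω} = ⋃ i, {ω | x < X i ω} := by
    intro x; ext ω
    simp only [Set.mem_setOf_eq, Set.mem_iUnion, maxRV]
    rw [lt_ciSup_iff (Set.finite_range _).bddAbove]
  have hTnn : ∀ (i : Fin n) (x : ℝ), 0 ≤ tailP μ (X i) x := fun i x => ENNReal.toReal_nonneg
  have hTanti : ∀ i : Fin n, Antitone (tailP μ (X i)) := by
    intro i x x' hxx'
    exact ENNReal.toReal_mono (hfin _) (measure_mono fun ω h => lt_of_le_of_lt hxx' h)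
  have hTpos : ∀ (i : Fin n) (x : ℝ), 0 < tailP μ (X i) x := by
    intro i x
    by_contra hle
    push_neg at hle
    have hx0 : tailP μ (X i) x = 0 := le_antisymm hle (hTnn i x)
    have hev : ∀ᶠ z in atTop, tailP μ (X i) (z * 2) / tailP μ (X i) z = 0 := by
      filter_upwards [eventually_ge_atTop x] with z hz
      have h1 : tailP μ (X i) z = 0 := le_antisymm (hx0 ▸ hTanti i hz) (hTnn i z)
      simp [h1]
    have h0 : Tendsto (fun z => tailP μ (X i) (z * 2) / tailP μ (X i) z) atTop (𝓝 0) :=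
      Tendsto.congr' (hev.mono fun z h => h.symm) tendsto_const_nhds
    have h2 := hR i 2 two_pos
    have := tendsto_nhds_unique h2 h0
    exact absurd this (ne_of_gt (Real.rpow_pos_of_pos two_pos _))
  have hMT : ∀ (i : Fin n) (x : ℝ), tailP μ (X i) x ≤ tailP μ (maxRV X) x := by
    intro i x
    refine ENNReal.toReal_mono (hfin _) (measure_mono fun ω h => ?_)
    rw [Set.mem_setOf_eq] at h ⊢
    simp only [maxRV]
    exact lt_of_lt_of_le h (le_ciSup (f := fun j => X j ω) (Set.finite_range _).bddAbove i)
  have i0 : Fin n := ⟨0, Nat.pos_of_ne_zero (NeZero.ne n)⟩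
  have hMpos : ∀ x, 0 < tailP μ (maxRV X) x := fun x => lt_of_lt_of_le (hTpos i0 x) (hMT i0 x)
  set S : ℝ → ℝ := fun x => ∑ i, tailP μ (X i) x with hS
  set D : ℝ → ℝ := fun x => ∑ i : Fin n, ∑ j : Fin n,
      (if i < j then (μ {ω | x < X i ω ∧ x < X j ω}).toReal else 0) with hD
  have hSpos : ∀ x, 0 < S x := fun x =>
    Finset.sum_pos (fun i _ => hTpos i x) Finset.univ_nonempty
  have hTS : ∀ (i : Fin n) (x : ℝ), tailP μ (X i) x ≤ S x := fun i x =>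
    Finset.single_le_sum (fun j _ => hTnn j x) (Finset.mem_univ i)
  have hsumne : ∀ (f : Fin n → ENNReal), (∀ i, f i ≠ ⊤) → ∑ i, f i ≠ ⊤ := by
    intro f hf
    exact (ENNReal.sum_lt_top.2 fun i _ => lt_top_iff_ne_top.2 (hf i)).ne
  have hMS : ∀ x, tailP μ (maxRV X) x ≤ S x := by
    intro x
    have h := measure_iUnion_fintype_le μ (fun i => {ω | x < X i ω})
    rw [← hmaxset] at h
    calc tailP μ (maxRV X) x ≤ (∑ i, μ {ω | x < X i ω}).toReal :=
          ENNReal.toReal_mono (hsumne _ fun i => hfin _) h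
      _ = S x := ENNReal.toReal_sum fun i _ => hfin _
  have hSMD : ∀ x, S x ≤ tailP μ (maxRV X) x + D x := by
    intro x
    have hb := bonferroni_s11 μ (fun i => {ω | x < X i ω}) (fun i => hAmeas i x)
    have hne2 : (μ (⋃ i, {ω | x < X i ω}) + ∑ i : Fin n, ∑ j : Fin n,
        (if i < j then μ ({ω | x < X i ω} ∩ {ω | x < X j ω}) else 0)) ≠ ⊤ := by
      refine ENNReal.add_ne_top.2 ⟨hfin _, hsumne _ fun i => hsumne _ fun j => ?_⟩
      split_ifs <;> simp [hfin]
    have h1 := ENNReal.toReal_mono hne2 hb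
    rw [ENNReal.toReal_sum (fun i _ => hfin _)] at h1
    rw [ENNReal.toReal_add (hfin _) (hsumne _ fun i => hsumne _ fun j => by
      split_ifs <;> simp [hfin])] at h1
    rw [ENNReal.toReal_sum (fun i _ => hsumne _ fun j => by split_ifs <;> simp [hfin])] at h1
    have hconv : ∀ i : Fin n, (∑ j : Fin n,
        (if i < j then μ ({ω | x < X i ω} ∩ {ω | x < X j ω}) else 0)).toReal
        = ∑ j : Fin n, (if i < j then (μ {ω | x < X i ω ∧ x < X j ω}).toReal else 0) := by
      intro i
      rw [ENNReal.toReal_sum (fun j _ => by split_ifs <;> simp [hfin])]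
      refine Finset.sum_congr rfl fun j _ => ?_
      split_ifs with h
      · congr 1
      · simp
    calc S x = ∑ i, (μ {ω | x < X i ω}).toReal := rfl
      _ ≤ (μ (⋃ i, {ω | x < X i ω})).toReal + ∑ i : Fin n, (∑ j : Fin n,
            (if i < j then μ ({ω | x < X i ω} ∩ {ω | x < X j ω}) else 0)).toReal := h1
      _ = tailP μ (maxRV X) x + D x := by
          rw [hD]
          congr 1
          · rw [tailP, hmaxset]
          · exact Finset.sum_congr rfl fun i _ => hconv i
  have hDM : Tendsto (fun x => D x / tailP μ (maxRV X) x) atTop (𝓝 0) := by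
    have heq : ∀ x, D x / tailP μ (maxRV X) x = ∑ i : Fin n, ∑ j : Fin n,
        (if i < j then (μ {ω | x < X i ω ∧ x < X j ω}).toReal / tailP μ (maxRV X) x else 0) := by
      intro x
      rw [hD, Finset.sum_div]
      refine Finset.sum_congr rfl fun i _ => ?_
      rw [Finset.sum_div]
      refine Finset.sum_congr rfl fun j _ => ?_
      split_ifs <;> simp
    have hsum : Tendsto (fun x => ∑ i : Fin n, ∑ j : Fin n,
        (if i < j then (μ {ω | x < X i ω ∧ x < X j ω}).toReal / tailP μ (maxRV X) x else 0))
        atTop (𝓝 0) := by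
      have h0 : (0:ℝ) = ∑ _i : Fin n, ∑ _j : Fin n, (0:ℝ) := by simp
      rw [h0]
      refine tendsto_finset_sum _ fun i _ => tendsto_finset_sum _ fun j _ => ?_
      by_cases h : i < j
      · simpa [h] using hv1 i j h
      · simp [h]
    exact hsum.congr fun x => (heq x).symm
  have hSM : Tendsto (fun x => S x / tailP μ (maxRV X) x) atTop (𝓝 1) := by
    have hub : ∀ x, S x / tailP μ (maxRV X) x ≤ 1 + D x / tailP μ (maxRV X) x := by
      intro x
      have h1 : S x / tailP μ (maxRV X) x ≤
          (tailP μ (maxRV X) x + D x) / tailP μ (maxRV X) x :=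
        div_le_div_of_nonneg_right (hSMD x) (hMpos x).le
      rwa [add_div, div_self (hMpos x).ne'] at h1
    have hlb : ∀ x, 1 ≤ S x / tailP μ (maxRV X) x := fun x =>
      (one_le_div (hMpos x)).2 (hMS x)
    have hto : Tendsto (fun x => 1 + D x / tailP μ (maxRV X) x) atTop (𝓝 1) := by
      simpa using tendsto_const_nhds.add hDM
    exact tendsto_of_tendsto_of_tendsto_of_le_of_le tendsto_const_nhds hto hlb hub
  have hMS1 : Tendsto (fun x => tailP μ (maxRV X) x / S x) atTop (𝓝 1) := by
    have h := hSM.inv₀ one_ne_zero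
    simpa [inv_div] using h
  have hSrat : ∀ y : ℝ, 0 < y → Tendsto (fun x => S (x * y) / S x) atTop (𝓝 (y ^ (-α))) := by
    intro y hy
    have hbound : ∀ x, ‖S (x*y)/S x - y ^ (-α)‖ ≤
        ∑ i, ‖tailP μ (X i) (x*y) / tailP μ (X i) x - y ^ (-α)‖ := by
      intro x
      have hSx := hSpos x
      have hsub : ∑ i, (tailP μ (X i) (x*y) - y ^ (-α) * tailP μ (X i) x)
          = S (x*y) - y ^ (-α) * S x := by
        rw [Finset.sum_sub_distrib, ← Finset.mul_sum]
      have key : S (x*y)/S x - y ^ (-α)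
          = ∑ i, (tailP μ (X i) (x*y) - y ^ (-α) * tailP μ (X i) x) / S x := by
        rw [← Finset.sum_div, hsub, sub_div, mul_div_assoc, div_self hSx.ne', mul_one]
      rw [key]
      calc ‖∑ i, (tailP μ (X i) (x*y) - y ^ (-α) * tailP μ (X i) x) / S x‖
          ≤ ∑ i, ‖(tailP μ (X i) (x*y) - y ^ (-α) * tailP μ (X i) x) / S x‖ := norm_sum_le _ _
        _ ≤ ∑ i, ‖tailP μ (X i) (x*y) / tailP μ (X i) x - y ^ (-α)‖ := by
            refine Finset.sum_le_sum fun i _ => ?_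
            have hTi := hTpos i x
            have hrw : (tailP μ (X i) (x*y) - y ^ (-α) * tailP μ (X i) x) / S x
                = (tailP μ (X i) (x*y) / tailP μ (X i) x - y ^ (-α)) * (tailP μ (X i) x / S x) := by
              field_simp
            rw [hrw, norm_mul]
            have h1 : ‖tailP μ (X i) x / S x‖ ≤ 1 := by
              rw [Real.norm_eq_abs, abs_of_nonneg (div_nonneg (hTnn i x) hSx.le)]
              exact div_le_one_of_le₀ (hTS i x) hSx.le
            calc ‖tailP μ (X i) (x*y) / tailP μ (X i) x - y ^ (-α)‖ * ‖tailP μ (X i) x / S x‖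
                ≤ ‖tailP μ (X i) (x*y) / tailP μ (X i) x - y ^ (-α)‖ * 1 :=
                  mul_le_mul_of_nonneg_left h1 (norm_nonneg _)
              _ = _ := mul_one _
    have hterms : Tendsto (fun x => ∑ i,
        ‖tailP μ (X i) (x*y) / tailP μ (X i) x - y ^ (-α)‖) atTop (𝓝 0) := by
      have h0 : (0:ℝ) = ∑ _i : Fin n, (0:ℝ) := by simp
      rw [h0]
      exact tendsto_finset_sum _ fun i _ =>
        tendsto_iff_norm_sub_tendsto_zero.1 (hR i y hy)
    rw [tendsto_iff_norm_sub_tendsto_zero]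
    exact squeeze_zero (fun x => norm_nonneg _) hbound hterms
  intro y hy
  have hmul : Tendsto (fun x : ℝ => x * y) atTop atTop :=
    Tendsto.atTop_mul_const hy tendsto_id
  have hA1 : Tendsto (fun x => tailP μ (maxRV X) (x*y) / S (x*y)) atTop (𝓝 1) :=
    hMS1.comp hmul
  have hprod := (hA1.mul (hSrat y hy)).mul hSM
  have heq : ∀ x, (tailP μ (maxRV X) (x*y) / S (x*y)) * (S (x*y) / S x)
      * (S x / tailP μ (maxRV X) x) = tailP μ (maxRV X) (x*y) / tailP μ (maxRV X) x := by
    intro x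
    field_simp [(hSpos (x*y)).ne', (hSpos x).ne', (hMpos x).ne']
  have hfinal := hprod.congr heq
  simpa using hfinal
end

section
/- Let F be a distribution function whose tail is regularly varying: (1−F)(x) ~ l(x) x^{−α} as x → ∞ for some α ≥ 0 and some slowly varying function l (in particular F is long-tailed). Then for every p ∈ (0,1) and every β ∈ (−1,1), the function h(x) = x^p (1 + β sin x) belongs to 𝓗*_F; that is, h is eventually positive, h(x) → ∞, h(x) = o(x), (1−F)(x + y h(x)) ~ (1−F)(x) for every y ∈ ℝ, and h is weakly self-neglecting (limsup_{x→∞} h(x + y h(x))/h(x) < ∞ for every y ∈ ℝ). -/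
open MeasureTheory Filter Topology Asymptotics

section auxlem

open Real Filter Topology

private lemma tail_pos_ev
    (F : ℝ → ℝ) (α : ℝ) (l : ℝ → ℝ) (hlpos : ∀ᶠ x in atTop, 0 < l x)
    (hreg : Tendsto (fun x => (1 - F x) / (l x * x ^ (-α))) atTop (𝓝 1)) :
    ∀ᶠ x in atTop, 0 < 1 - F x := by
  have h2 : ∀ᶠ x in atTop, (1:ℝ)/2 < (1 - F x) / (l x * x ^ (-α)) :=
    hreg.eventually_const_lt (by norm_num)
  filter_upwards [h2, hlpos, eventually_gt_atTop (0:ℝ)] with x hx hlx hx0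
  have hd : 0 < l x * x ^ (-α) := mul_pos hlx (rpow_pos_of_pos hx0 _)
  have := (lt_div_iff₀ hd).mp hx
  nlinarith

private lemma tail_ratio_lim
    (F : ℝ → ℝ) (α : ℝ) (l : ℝ → ℝ) (hlpos : ∀ᶠ x in atTop, 0 < l x)
    (hl : ∀ y : ℝ, 0 < y → Tendsto (fun x => l (x * y) / l x) atTop (𝓝 1))
    (hreg : Tendsto (fun x => (1 - F x) / (l x * x ^ (-α))) atTop (𝓝 1))
    (c : ℝ) (hc : 0 < c) :
    Tendsto (fun x => (1 - F (c * x)) / (1 - F x)) atTop (𝓝 (c ^ (-α))) := by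
  have hmul : Tendsto (fun x : ℝ => c * x) atTop atTop :=
    Tendsto.const_mul_atTop hc tendsto_id
  have h1 : Tendsto (fun x => (1 - F (c*x)) / (l (c*x) * (c*x) ^ (-α))) atTop (𝓝 1) :=
    hreg.comp hmul
  have h2 : Tendsto (fun x => (l x * x ^ (-α)) / (1 - F x)) atTop (𝓝 1) := by
    have := hreg.inv₀ one_ne_zero
    simpa [inv_div] using this
  have h3 : Tendsto (fun x => l (c * x) / l x) atTop (𝓝 1) := by
    have := hl c hc
    refine this.congr fun x => by rw [mul_comm]
  have h4 : Tendsto (fun x => ((1 - F (c*x)) / (l (c*x) * (c*x) ^ (-α))) *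
      ((l x * x ^ (-α)) / (1 - F x)) * (l (c * x) / l x) * c ^ (-α)) atTop
      (𝓝 (c ^ (-α))) := by
    simpa using ((h1.mul h2).mul h3).mul (tendsto_const_nhds (x := c ^ (-α)))
  refine h4.congr' ?_
  filter_upwards [hlpos, hmul.eventually hlpos, tail_pos_ev F α l hlpos hreg,
    eventually_gt_atTop (0:ℝ)] with x hl1 hl2 hT hx0
  have hxr : (0:ℝ) < x ^ (-α) := rpow_pos_of_pos hx0 _
  have hcr : (0:ℝ) < c ^ (-α) := rpow_pos_of_pos hc _
  have hmr : (c * x) ^ (-α) = c ^ (-α) * x ^ (-α) := mul_rpow hc.le hx0.le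
  rw [hmr]
  field_simp

end auxlem

open Real in
/-- if `F` has a regularly varying tail `(1-F)(x) ~ l(x) x^{-α}` with
`α ≥ 0` and `l` slowly varying, then `x ↦ x^p (1 + β sin x) ∈ 𝓗*_F` for all
`p ∈ (0,1)` and `β ∈ (-1,1)`. -/
theorem scale_class_of_reg_var_tail
    (F : ℝ → ℝ) (hmono : Monotone F)
    (hbot : Tendsto F atBot (𝓝 0)) (htop : Tendsto F atTop (𝓝 1))
    (α : ℝ) (hα : 0 ≤ α)
    (l : ℝ → ℝ) (hlpos : ∀ᶠ x in atTop, 0 < l x)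
    (hl : ∀ y : ℝ, 0 < y → Tendsto (fun x => l (x * y) / l x) atTop (𝓝 1))
    (hreg : Tendsto (fun x => (1 - F x) / (l x * x ^ (-α))) atTop (𝓝 1)) :
    ∀ p : ℝ, 0 < p → p < 1 → ∀ β : ℝ, -1 < β → β < 1 →
      MemScaleClass (fun x => 1 - F x) (fun x => x ^ p * (1 + β * Real.sin x)) ∧
        Tendsto (fun x => x ^ p * (1 + β * Real.sin x)) atTop atTop := by
  intro p hp0 hp1 β hβ1 hβ2
  set h : ℝ → ℝ := fun x => x ^ p * (1 + β * Real.sin x) with hh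
  have hβ : |β| < 1 := abs_lt.mpr ⟨hβ1, hβ2⟩
  have hβpos : 0 < 1 - |β| := by linarith
  have habs : ∀ x : ℝ, |β * Real.sin x| ≤ |β| := by
    intro x
    rw [abs_mul]
    exact mul_le_of_le_one_right (abs_nonneg β) (abs_sin_le_one x)
  have hfac_lb : ∀ x : ℝ, 1 - |β| ≤ 1 + β * Real.sin x := fun x => by
    linarith [neg_abs_le (β * Real.sin x), habs x]
  have hfac_ub : ∀ x : ℝ, 1 + β * Real.sin x ≤ 2 := fun x => by
    linarith [le_abs_self (β * Real.sin x), habs x]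
  have hposx : ∀ x : ℝ, 0 < x → 0 < h x := fun x hx =>
    mul_pos (rpow_pos_of_pos hx _) (lt_of_lt_of_le hβpos (hfac_lb x))
  have hevpos : ∀ᶠ x in atTop, 0 < h x := by
    filter_upwards [eventually_gt_atTop (0:ℝ)] with x hx using hposx x hx
  -- little o
  have hxp : (fun x : ℝ => x ^ p) =o[atTop] (fun x : ℝ => x) := by
    rw [Asymptotics.isLittleO_iff_tendsto (fun x hx => by
      rw [hx]; exact Real.zero_rpow hp0.ne')]
    have key : Tendsto (fun x : ℝ => x ^ (p - 1)) atTop (𝓝 0) := by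
      have := tendsto_rpow_neg_atTop (show (0:ℝ) < 1 - p by linarith)
      simpa [neg_sub] using this
    refine key.congr' ?_
    filter_upwards [eventually_gt_atTop (0:ℝ)] with x hx
    rw [Real.rpow_sub hx, Real.rpow_one]
  have hbound : (fun x => 1 + β * Real.sin x) =O[atTop] (fun _ : ℝ => (1:ℝ)) := by
    refine Asymptotics.IsBigO.of_bound 2 ?_
    filter_upwards with x
    have := hfac_lb x; have := hfac_ub x
    simp only [Real.norm_eq_abs, norm_one]
    rw [abs_le]; constructor <;> linarith
  have ho : h =o[atTop] fun x : ℝ => x := by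
    have := hxp.mul_isBigO hbound
    simpa using this
  -- smallness helper
  have hsmall : ∀ y c : ℝ, 0 < c → ∀ᶠ x in atTop, |y * h x| ≤ c * x := by
    intro y c hc
    have hdef := ho.def (show 0 < c / (|y| + 1) by positivity)
    filter_upwards [hdef, eventually_ge_atTop (0:ℝ)] with x hx hx0
    rw [Real.norm_eq_abs, Real.norm_eq_abs] at hx
    have h1 : |y * h x| = |y| * |h x| := abs_mul _ _
    have h2 : |y| * |h x| ≤ |y| * (c / (|y| + 1) * |x|) :=
      mul_le_mul_of_nonneg_left hx (abs_nonneg y)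
    have h3 : |y| * (c / (|y| + 1) * |x|) ≤ c * x := by
      rw [abs_of_nonneg hx0]
      have hy1 : 0 < |y| + 1 := by positivity
      have : |y| * (c / (|y| + 1)) ≤ c := by
        rw [mul_div_assoc']
        exact (div_le_iff₀ hy1).mpr (by nlinarith [abs_nonneg y])
      nlinarith [abs_nonneg y]
    calc |y * h x| = |y| * |h x| := h1
      _ ≤ |y| * (c / (|y| + 1) * |x|) := h2
      _ ≤ c * x := h3
  -- tendsto atTop
  have htt : Tendsto h atTop atTop := by
    refine tendsto_atTop_mono' atTop ?_ ((tendsto_rpow_atTop hp0).const_mul_atTop hβpos)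
    filter_upwards [eventually_ge_atTop (0:ℝ)] with x hx
    have := mul_le_mul_of_nonneg_left (hfac_lb x) (rpow_nonneg hx p)
    calc (1 - |β|) * x ^ p = x ^ p * (1 - |β|) := by ring
      _ ≤ x ^ p * (1 + β * Real.sin x) := this
  have hTpos := tail_pos_ev F α l hlpos hreg
  -- tail equivalence
  have htail : ∀ y : ℝ, Tendsto (fun x => (1 - F (x + y * h x)) / (1 - F x)) atTop (𝓝 1) := by
    intro y
    rw [Metric.tendsto_nhds]
    intro ε hε
    have hcont : ContinuousAt (fun c : ℝ => c ^ (-α)) 1 :=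
      Real.continuousAt_rpow_const 1 (-α) (Or.inl one_ne_zero)
    rw [Metric.continuousAt_iff] at hcont
    obtain ⟨δ, hδ0, hδ⟩ := hcont (ε / 2) (by positivity)
    set δ' : ℝ := min (δ / 2) (1 / 2) with hδ'def
    have hδ'0 : 0 < δ' := lt_min (by linarith) (by norm_num)
    have hδ'le : δ' ≤ 1 / 2 := min_le_right _ _
    have hδ'lt : δ' < δ := lt_of_le_of_lt (min_le_left _ _) (by linarith)
    have hc1 : (0:ℝ) < 1 - δ' := by linarith
    have hc2 : (0:ℝ) < 1 + δ' := by linarith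
    have hb1 : |(1 - δ') ^ (-α) - 1| < ε / 2 := by
      have := hδ (x := 1 - δ') (by rw [Real.dist_eq]; rw [abs_of_nonpos (by linarith)]; linarith)
      rwa [Real.dist_eq, Real.one_rpow] at this
    have hb2 : |(1 + δ') ^ (-α) - 1| < ε / 2 := by
      have := hδ (x := 1 + δ') (by rw [Real.dist_eq]; rw [abs_of_nonneg (by linarith)]; linarith)
      rwa [Real.dist_eq, Real.one_rpow] at this
    have hr1 := tail_ratio_lim F α l hlpos hl hreg (1 - δ') hc1
    have hr2 := tail_ratio_lim F α l hlpos hl hreg (1 + δ') hc2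
    have he1 : ∀ᶠ x in atTop, (1 - F ((1 - δ') * x)) / (1 - F x) < 1 + ε :=
      hr1.eventually_lt_const (by cases' abs_lt.mp hb1 with h1 h2; linarith)
    have he2 : ∀ᶠ x in atTop, 1 - ε < (1 - F ((1 + δ') * x)) / (1 - F x) :=
      hr2.eventually_const_lt (by cases' abs_lt.mp hb2 with h1 h2; linarith)
    have hsm := hsmall y δ' hδ'0
    filter_upwards [he1, he2, hsm, hTpos, eventually_gt_atTop (0:ℝ)] with x h1x h2x hsx hTx hx0
    have hub : x + y * h x ≤ (1 + δ') * x := by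
      have := le_abs_self (y * h x); nlinarith
    have hlb : (1 - δ') * x ≤ x + y * h x := by
      have := neg_abs_le (y * h x); nlinarith
    have hT1 : 1 - F (x + y * h x) ≤ 1 - F ((1 - δ') * x) := by
      have := hmono hlb; linarith
    have hT2 : 1 - F ((1 + δ') * x) ≤ 1 - F (x + y * h x) := by
      have := hmono hub; linarith
    rw [Real.dist_eq, abs_lt]
    refine ⟨?_, ?_⟩
    · have := (div_le_div_iff_of_pos_right hTx).mpr hT2
      linarith
    · have := (div_le_div_iff_of_pos_right hTx).mpr hT1
      linarith
  -- weakly self-neglecting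
  have hwsn : WeaklySelfNeg h := by
    intro y
    set C : ℝ := (2:ℝ) ^ p * 2 / (1 - |β|) with hC
    have hev : ∀ᶠ x in atTop, ((h (x + y * h x) / h x : ℝ) : EReal) ≤ (C : EReal) := by
      filter_upwards [hsmall y (1/2) (by norm_num), eventually_gt_atTop (0:ℝ)] with x hsx hx0
      rw [EReal.coe_le_coe_iff]
      have hub : x + y * h x ≤ 2 * x := by
        have := le_abs_self (y * h x); nlinarith
      have hlb : 0 ≤ x + y * h x := by
        have := neg_abs_le (y * h x); nlinarith
      have hnum : h (x + y * h x) ≤ (2 * x) ^ p * 2 := by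
        have h1 : (x + y * h x) ^ p ≤ (2 * x) ^ p := rpow_le_rpow hlb hub hp0.le
        have h2 : 1 + β * Real.sin (x + y * h x) ≤ 2 := hfac_ub _
        have h3 : 0 ≤ (x + y * h x) ^ p := rpow_nonneg hlb p
        have h4 : 0 ≤ 1 + β * Real.sin (x + y * h x) := le_trans hβpos.le (hfac_lb _)
        calc h (x + y * h x) = (x + y * h x) ^ p * (1 + β * Real.sin (x + y * h x)) := rfl
          _ ≤ (2 * x) ^ p * 2 := mul_le_mul h1 h2 h4 (rpow_nonneg (by linarith) p)
      have hden : (1 - |β|) * x ^ p ≤ h x := by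
        have := mul_le_mul_of_nonneg_left (hfac_lb x) (rpow_nonneg hx0.le p)
        calc (1 - |β|) * x ^ p = x ^ p * (1 - |β|) := by ring
          _ ≤ x ^ p * (1 + β * Real.sin x) := this
      have hdenpos : 0 < (1 - |β|) * x ^ p := mul_pos hβpos (rpow_pos_of_pos hx0 p)
      have hstep : h (x + y * h x) / h x ≤ (2 * x) ^ p * 2 / ((1 - |β|) * x ^ p) :=
        div_le_div₀ (by positivity) hnum hdenpos hden
      refine le_trans hstep (le_of_eq ?_)
      rw [Real.mul_rpow (by norm_num) hx0.le]
      have hxp0 : x ^ p ≠ 0 := (rpow_pos_of_pos hx0 p).ne'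
      field_simp [hC]
      have hCm : C * (1 - |β|) = 2 ^ p * 2 := by rw [hC]; exact div_mul_cancel₀ _ hβpos.ne'
      linear_combination -hCm
    calc atTop.limsup (fun x => ((h (x + y * h x) / h x : ℝ) : EReal))
        ≤ (C : EReal) := Filter.limsup_le_of_le (by isBoundedDefault) hev
      _ < ⊤ := EReal.coe_lt_top C
  exact ⟨⟨hevpos, ho, htail, hwsn⟩, htt⟩
end
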